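/- arXiv:0708.0499 — 8 statements merged into one kernel-verified Lean document; each statement's English description precedes it below -/
import Mathlib

section
/- Let W, W₁, W₂ be i.i.d. integrable real random variables with CDF H, and let H⁻ denote the CDF of −W. Then ∫_{-∞}^{∞} (H(t) − H⁻(t))² dt = E(|W₁ + W₂| − |W₁ − W₂|). -/
open MeasureTheory Set ProbabilityTheory


lemma ind_diff_eq {u v : ℝ} (h : u ≤ v) :
    (fun t : ℝ => (Ici u).indicator (1 : ℝ → ℝ) t - (Ici v).indicator 1 t)
      = (Ico u v).indicator 1 := by
  funext t
  simp only [Set.indicator_apply, mem_Ici, mem_Ico, Pi.one_apply]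
  by_cases h1 : u ≤ t <;> by_cases h2 : v ≤ t
  · simp [h1, h2, not_lt.2 h2]
  · simp [h1, h2, not_le.1 h2]
  · exact absurd (h.trans h2) h1
  · simp [h1, h2]

lemma integrable_ind_diff (u v : ℝ) :
    Integrable (fun t : ℝ => (Ici u).indicator (1 : ℝ → ℝ) t - (Ici v).indicator 1 t) := by
  have key : ∀ a b : ℝ, a ≤ b →
      Integrable (fun t : ℝ => (Ici a).indicator (1 : ℝ → ℝ) t - (Ici b).indicator 1 t) := by
    intro a b hab
    rw [ind_diff_eq hab]
    rw [integrable_indicator_iff measurableSet_Ico]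
    exact integrableOn_const measure_Ico_lt_top.ne
  rcases le_total u v with h | h
  · exact key u v h
  · have := (key v u h).neg
    have e : (fun t : ℝ => (Ici u).indicator (1 : ℝ → ℝ) t - (Ici v).indicator 1 t)
        = fun t => -((Ici v).indicator (1 : ℝ → ℝ) t - (Ici u).indicator 1 t) := by
      funext t; ring
    rw [e]; exact this

lemma integral_ind_diff (u v : ℝ) :
    ∫ t : ℝ, ((Ici u).indicator (1 : ℝ → ℝ) t - (Ici v).indicator 1 t) = v - u := by
  have key : ∀ a b : ℝ, a ≤ b →
      ∫ t : ℝ, ((Ici a).indicator (1 : ℝ → ℝ) t - (Ici b).indicator 1 t) = b - a := by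
    intro a b hab
    rw [ind_diff_eq hab, integral_indicator_one measurableSet_Ico]
    simp [Real.volume_Ico, ENNReal.toReal_ofReal (sub_nonneg.2 hab), hab]
  rcases le_total u v with h | h
  · exact key u v h
  · have h2 : ∫ t : ℝ, ((Ici u).indicator (1 : ℝ → ℝ) t - (Ici v).indicator 1 t)
        = - ∫ t : ℝ, ((Ici v).indicator (1 : ℝ → ℝ) t - (Ici u).indicator 1 t) := by
      rw [← integral_neg]; congr 1; funext t; ring
    rw [h2, key v u h]; ring

noncomputable def fInd (a t : ℝ) : ℝ :=
  (Ici a).indicator 1 t - (Ici (-a)).indicator 1 t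

lemma ind_mul_ind (u v t : ℝ) :
    (Ici u).indicator (1 : ℝ → ℝ) t * (Ici v).indicator 1 t
      = (Ici (max u v)).indicator 1 t := by
  simp only [Set.indicator_apply, mem_Ici, Pi.one_apply, max_le_iff]
  by_cases h1 : u ≤ t <;> by_cases h2 : v ≤ t <;> simp [h1, h2]

lemma fInd_mul (a b t : ℝ) :
    fInd a t * fInd b t
      = ((Ici (max a b)).indicator (1 : ℝ → ℝ) t - (Ici (max a (-b))).indicator 1 t)
        + ((Ici (max (-a) (-b))).indicator (1 : ℝ → ℝ) t - (Ici (max (-a) b)).indicator 1 t) := by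
  simp only [fInd, sub_mul, mul_sub]
  rw [ind_mul_ind a b t, ind_mul_ind a (-b) t, ind_mul_ind (-a) b t, ind_mul_ind (-a) (-b) t]
  ring

lemma integrable_fInd_mul (a b : ℝ) : Integrable (fun t => fInd a t * fInd b t) := by
  have e : (fun t => fInd a t * fInd b t)
      = fun t => ((Ici (max a b)).indicator (1 : ℝ → ℝ) t - (Ici (max a (-b))).indicator 1 t)
        + ((Ici (max (-a) (-b))).indicator (1 : ℝ → ℝ) t - (Ici (max (-a) b)).indicator 1 t) := by
    funext t; exact fInd_mul a b t
  rw [e]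
  exact (integrable_ind_diff _ _).add (integrable_ind_diff _ _)

lemma integral_fInd_mul (a b : ℝ) :
    ∫ t : ℝ, fInd a t * fInd b t = |a + b| - |a - b| := by
  have e : (fun t => fInd a t * fInd b t)
      = fun t => ((Ici (max a b)).indicator (1 : ℝ → ℝ) t - (Ici (max a (-b))).indicator 1 t)
        + ((Ici (max (-a) (-b))).indicator (1 : ℝ → ℝ) t - (Ici (max (-a) b)).indicator 1 t) := by
    funext t; exact fInd_mul a b t
  rw [e, integral_add (integrable_ind_diff _ _) (integrable_ind_diff _ _),
    integral_ind_diff, integral_ind_diff]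
  have m1 := max_add_min a b
  have m1' := max_sub_min_eq_abs a b
  have m2 := max_add_min a (-b)
  have m2' := max_sub_min_eq_abs a (-b)
  have m3 := max_add_min (-a) b
  have m3' := max_sub_min_eq_abs (-a) b
  have m4 := max_add_min (-a) (-b)
  have m4' := max_sub_min_eq_abs (-a) (-b)
  have a1 : |b - a| = |a - b| := abs_sub_comm b a
  have a2 : |(-b) - a| = |a + b| := by rw [show (-b) - a = -(a+b) by ring, abs_neg]
  have a3 : |b - (-a)| = |a + b| := by rw [show b - (-a) = a + b by ring]
  have a4 : |(-b) - (-a)| = |a - b| := by rw [show (-b) - (-a) = a - b by ring]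
  rw [a1] at m1'; rw [a2] at m2'; rw [a3] at m3'; rw [a4] at m4'
  linarith

lemma abs_fInd_le (a t : ℝ) :
    |fInd a t| ≤ (Ico (min a (-a)) (max a (-a))).indicator 1 t := by
  simp only [fInd, Set.indicator_apply, mem_Ici, mem_Ico, Pi.one_apply]
  by_cases h1 : a ≤ t <;> by_cases h2 : -a ≤ t
  · simp only [h1, h2, if_true, sub_self, abs_zero]
    split_ifs <;> norm_num
  · have hmem : min a (-a) ≤ t ∧ t < max a (-a) :=
      ⟨(min_le_left a (-a)).trans h1, lt_of_lt_of_le (not_le.1 h2) (le_max_right a (-a))⟩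
    simp [h1, h2, hmem]
  · have hmem : min a (-a) ≤ t ∧ t < max a (-a) :=
      ⟨(min_le_right a (-a)).trans h2, lt_of_lt_of_le (not_le.1 h1) (le_max_left a (-a))⟩
    simp [h1, h2, hmem]
  · simp only [h1, h2, if_false, sub_self, abs_zero]
    split_ifs <;> norm_num

lemma abs_fInd_le_one (a t : ℝ) : |fInd a t| ≤ 1 := by
  simp only [fInd, Set.indicator_apply, mem_Ici, Pi.one_apply]
  split_ifs <;> norm_num

lemma integral_abs_fInd_mul_le (a b : ℝ) :
    ∫ t : ℝ, ‖fInd a t * fInd b t‖ ≤ 2 * |a| := by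
  have hle : ∀ t : ℝ, ‖fInd a t * fInd b t‖
      ≤ (Ico (min a (-a)) (max a (-a))).indicator 1 t := by
    intro t
    rw [norm_mul, Real.norm_eq_abs, Real.norm_eq_abs]
    calc |fInd a t| * |fInd b t| ≤ (Ico (min a (-a)) (max a (-a))).indicator 1 t * 1 := by
          apply mul_le_mul (abs_fInd_le a t) (abs_fInd_le_one b t) (abs_nonneg _)
          simp only [Set.indicator_apply]; split_ifs <;> norm_num
      _ = _ := mul_one _
  have hint1 : Integrable (fun t : ℝ => ‖fInd a t * fInd b t‖) :=
    (integrable_fInd_mul a b).norm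
  have hint2 : Integrable ((Ico (min a (-a)) (max a (-a))).indicator (1 : ℝ → ℝ)) := by
    rw [integrable_indicator_iff measurableSet_Ico]
    exact integrableOn_const measure_Ico_lt_top.ne
  calc ∫ t : ℝ, ‖fInd a t * fInd b t‖
      ≤ ∫ t : ℝ, (Ico (min a (-a)) (max a (-a))).indicator 1 t := integral_mono hint1 hint2 hle
    _ = max a (-a) - min a (-a) := by
        rw [integral_indicator_one measurableSet_Ico]
        rcases le_total (min a (-a)) (max a (-a)) with h | h
        · simp [Real.volume_Ico, ENNReal.toReal_ofReal (sub_nonneg.2 h)]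
        · simp [Real.volume_Ico, ENNReal.toReal_ofReal]
    _ ≤ 2 * |a| := by
        have := max_sub_min_eq_abs a (-a)
        have h2 : |(-a) - a| = 2 * |a| := by
          rw [show (-a) - a = -(2*a) by ring, abs_neg, abs_mul]
          norm_num
        rw [this, h2]

lemma measurable_fInd_pair :
    Measurable (fun z : (ℝ × ℝ) × ℝ => fInd z.1.1 z.2 * fInd z.1.2 z.2) := by
  have key : ∀ g : (ℝ × ℝ) × ℝ → ℝ, Measurable g →
      Measurable (fun z : (ℝ × ℝ) × ℝ => (Ici (g z)).indicator (1 : ℝ → ℝ) z.2) := by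
    intro g hg
    have e : (fun z : (ℝ × ℝ) × ℝ => (Ici (g z)).indicator (1 : ℝ → ℝ) z.2)
        = {z : (ℝ × ℝ) × ℝ | g z ≤ z.2}.indicator 1 := by
      funext z
      simp [Set.indicator_apply, mem_Ici]
    rw [e]
    exact measurable_const.indicator (measurableSet_le hg measurable_snd)
  have h1 := key (fun z => z.1.1) (measurable_fst.comp measurable_fst)
  have h2 := key (fun z => -z.1.1) (measurable_fst.comp measurable_fst).neg
  have h3 := key (fun z => z.1.2) (measurable_snd.comp measurable_fst)
  have h4 := key (fun z => -z.1.2) (measurable_snd.comp measurable_fst).neg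
  exact ((h1.sub h2).mul (h3.sub h4))

lemma integrable_uncurry_fInd (μ : Measure ℝ) [IsProbabilityMeasure μ]
    (hint : Integrable (fun x : ℝ => x) μ) :
    Integrable (fun z : (ℝ × ℝ) × ℝ => fInd z.1.1 z.2 * fInd z.1.2 z.2)
      ((μ.prod μ).prod volume) := by
  rw [integrable_prod_iff measurable_fInd_pair.aestronglyMeasurable]
  constructor
  · exact ae_of_all _ fun p => integrable_fInd_mul p.1 p.2
  · have hdom : Integrable (fun p : ℝ × ℝ => 2 * |p.1|) (μ.prod μ) := by
      have h1 : Integrable (fun a : ℝ => 2 * |a|) μ := (hint.abs.const_mul 2)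
      have h2 : Integrable (fun b : ℝ => (1 : ℝ)) μ := integrable_const 1
      have := h1.mul_prod h2
      simpa using this
    apply hdom.mono
    · exact (measurable_fInd_pair.norm.aestronglyMeasurable.integral_prod_right')
    · refine ae_of_all _ fun p => ?_
      have hnn : 0 ≤ ∫ t : ℝ, ‖fInd p.1 t * fInd p.2 t‖ :=
        integral_nonneg fun t => norm_nonneg _
      rw [Real.norm_eq_abs, abs_of_nonneg hnn, Real.norm_eq_abs,
        abs_of_nonneg (by positivity : (0:ℝ) ≤ 2 * |p.1|)]
      exact integral_abs_fInd_mul_le p.1 p.2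

lemma integral_fInd (μ : Measure ℝ) [IsProbabilityMeasure μ] (t : ℝ) :
    ∫ a, fInd a t ∂μ = (μ (Iic t)).toReal - (μ (Ici (-t))).toReal := by
  have e : (fun a => fInd a t)
      = fun a => (Iic t).indicator (1 : ℝ → ℝ) a - (Ici (-t)).indicator 1 a := by
    funext a
    simp only [fInd, Set.indicator_apply, mem_Ici, mem_Iic, Pi.one_apply, neg_le]
  have h1 : Integrable (fun a => (Iic t).indicator (1 : ℝ → ℝ) a) μ :=
    (integrable_const (1:ℝ)).indicator measurableSet_Iic
  have h2 : Integrable (fun a => (Ici (-t)).indicator (1 : ℝ → ℝ) a) μ :=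
    (integrable_const (1:ℝ)).indicator measurableSet_Ici
  rw [e, integral_sub h1 h2,
    integral_indicator_one measurableSet_Iic, integral_indicator_one measurableSet_Ici]
  rfl

/-- For i.i.d. integrable `W₁, W₂` with common law `μ` (CDF `H`), the squared `L²`
distance between `H` and the CDF `H⁻` of `-W` equals `E(|W₁ + W₂| - |W₁ - W₂|)`. -/
theorem sq_l2_dist_cdf_reflected {Ω : Type*} [MeasureSpace Ω]
    [IsProbabilityMeasure (ℙ : Measure Ω)]
    (W₁ W₂ : Ω → ℝ) (μ : Measure ℝ) [IsProbabilityMeasure μ]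
    (hm₁ : Measurable W₁) (hm₂ : Measurable W₂)
    (hlaw₁ : Measure.map W₁ ℙ = μ) (hlaw₂ : Measure.map W₂ ℙ = μ)
    (hindep : IndepFun W₁ W₂ ℙ)
    (hint : Integrable (fun x : ℝ => x) μ) :
    ∫ t : ℝ, ((μ (Iic t)).toReal - ((μ.map (fun x : ℝ => -x)) (Iic t)).toReal) ^ 2 =
      ∫ ω, (|W₁ ω + W₂ ω| - |W₁ ω - W₂ ω|) ∂ℙ := by
  have hrefl : ∀ t : ℝ, (μ.map (fun x : ℝ => -x)) (Iic t) = μ (Ici (-t)) := by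
    intro t
    rw [Measure.map_apply measurable_neg measurableSet_Iic]
    congr 1
    ext x; simp [neg_le]
  have hsq : ∀ t : ℝ, ((μ (Iic t)).toReal - ((μ.map (fun x : ℝ => -x)) (Iic t)).toReal) ^ 2
      = ∫ p : ℝ × ℝ, fInd p.1 t * fInd p.2 t ∂(μ.prod μ) := by
    intro t
    rw [hrefl t, ← integral_fInd μ t, sq,
      ← integral_prod_mul (fun a => fInd a t) (fun b => fInd b t)]
  calc ∫ t : ℝ, ((μ (Iic t)).toReal - ((μ.map (fun x : ℝ => -x)) (Iic t)).toReal) ^ 2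
      = ∫ t : ℝ, ∫ p : ℝ × ℝ, fInd p.1 t * fInd p.2 t ∂(μ.prod μ) :=
        integral_congr_ae (ae_of_all _ hsq)
    _ = ∫ p : ℝ × ℝ, (∫ t : ℝ, fInd p.1 t * fInd p.2 t) ∂(μ.prod μ) :=
        (integral_integral_swap (integrable_uncurry_fInd μ hint)).symm
    _ = ∫ p : ℝ × ℝ, (|p.1 + p.2| - |p.1 - p.2|) ∂(μ.prod μ) :=
        integral_congr_ae (ae_of_all _ fun p => integral_fInd_mul p.1 p.2)
    _ = ∫ ω, (|W₁ ω + W₂ ω| - |W₁ ω - W₂ ω|) ∂ℙ := by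
        have hmap : Measure.map (fun ω => (W₁ ω, W₂ ω)) ℙ = μ.prod μ := by
          have h := (indepFun_iff_map_prod_eq_prod_map_map hm₁.aemeasurable
            hm₂.aemeasurable).1 hindep
          rw [hlaw₁, hlaw₂] at h
          exact h
        have hcont : Continuous fun p : ℝ × ℝ => |p.1 + p.2| - |p.1 - p.2| :=
          ((continuous_fst.add continuous_snd).abs).sub
            ((continuous_fst.sub continuous_snd).abs)
        rw [← hmap, integral_map (hm₁.prodMk hm₂).aemeasurable
          hcont.aestronglyMeasurable]
end

section
/- A real random variable W satisfies ∫ (H_W(t) − H_{−W}(t))² dt = 0 (where the CDFs are integrable differences) if and only if W is symmetric about zero, equivalently E(|W₁+W₂|) = E(|W₁−W₂|) for i.i.d. copies W₁, W₂ when W is symmetric about zero. -/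
open MeasureTheory Set ProbabilityTheory
open Filter Topology

private lemma tail_right (μ : Measure ℝ) [IsProbabilityMeasure μ]
    (hint : Integrable (fun x : ℝ => x) μ) :
    ∫⁻ t in Ioi (0:ℝ), μ (Ioi t) < ⊤ := by
  have key := lintegral_eq_lintegral_meas_lt μ (f := fun x : ℝ => max x 0)
      (Filter.Eventually.of_forall fun x => le_max_right _ _)
      (measurable_id.max measurable_const).aemeasurable
  have heq : ∫⁻ t in Ioi (0:ℝ), μ {a : ℝ | t < max a 0} = ∫⁻ t in Ioi (0:ℝ), μ (Ioi t) := by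
    refine setLIntegral_congr_fun measurableSet_Ioi (fun t ht => ?_)
    congr 1
    ext a
    simp only [mem_setOf_eq, mem_Ioi, lt_max_iff]
    exact ⟨fun h => h.resolve_right (not_lt.2 (le_of_lt ht)), Or.inl⟩
  rw [← heq, ← key]
  calc ∫⁻ x, ENNReal.ofReal (max x 0) ∂μ ≤ ∫⁻ x, (‖x‖₊ : ENNReal) ∂μ := by
        refine lintegral_mono fun x => ?_
        rw [show ((‖x‖₊ : ENNReal)) = ‖x‖ₑ from rfl, Real.enorm_eq_ofReal_abs]
        exact ENNReal.ofReal_le_ofReal (max_le (le_abs_self x) (abs_nonneg x))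
    _ < ⊤ := hint.2

private lemma tail_left (μ : Measure ℝ) [IsProbabilityMeasure μ]
    (hint : Integrable (fun x : ℝ => x) μ) :
    ∫⁻ t in Iio (0:ℝ), μ (Iic t) < ⊤ := by
  have key := lintegral_eq_lintegral_meas_le μ (f := fun x : ℝ => max (-x) 0)
      (Filter.Eventually.of_forall fun x => le_max_right _ _)
      (measurable_neg.max measurable_const).aemeasurable
  have heq : ∫⁻ t in Ioi (0:ℝ), μ {a : ℝ | t ≤ max (-a) 0} = ∫⁻ t in Ioi (0:ℝ), μ (Iic (-t)) := by
    refine setLIntegral_congr_fun measurableSet_Ioi (fun t ht => ?_)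
    congr 1
    ext a
    simp only [mem_setOf_eq, mem_Iic, le_max_iff]
    constructor
    · rintro (h | h)
      · linarith
      · exact absurd ht (not_lt.2 h)
    · intro h; left; linarith
  -- change of variables t ↦ -t
  have hmeas : Measurable fun t : ℝ => μ (Iic t) := by
    refine Monotone.measurable fun a b hab => measure_mono (Iic_subset_Iic.2 hab)
  have hneg : Measure.map Neg.neg (volume : Measure ℝ) = volume :=
    Measure.map_neg_eq_self (volume : Measure ℝ)
  have hres : (volume : Measure ℝ).restrict (Iio 0)
      = Measure.map Neg.neg ((volume : Measure ℝ).restrict (Ioi 0)) := by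
    rw [← hneg, Measure.restrict_map measurable_neg measurableSet_Iio, hneg]
    congr 1
    ext x
    simp
  have : ∫⁻ t in Iio (0:ℝ), μ (Iic t) = ∫⁻ t in Ioi (0:ℝ), μ (Iic (-t)) := by
    rw [hres, lintegral_map hmeas measurable_neg]
  rw [this, ← heq, ← key]
  calc ∫⁻ x, ENNReal.ofReal (max (-x) 0) ∂μ ≤ ∫⁻ x, (‖x‖₊ : ENNReal) ∂μ := by
        refine lintegral_mono fun x => ?_
        rw [show ((‖x‖₊ : ENNReal)) = ‖x‖ₑ from rfl, Real.enorm_eq_ofReal_abs]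
        exact ENNReal.ofReal_le_ofReal (max_le (neg_le_abs x) (abs_nonneg x))
    _ < ⊤ := hint.2

private lemma eq_zero_of_right_cont {f : ℝ → ℝ}
    (hf : ∀ x, ContinuousWithinAt f (Ici x) x)
    (hae : ∀ᵐ t : ℝ, f t = 0) (t : ℝ) : f t = 0 := by
  have h1 : Tendsto f (𝓝[>] t) (𝓝 (f t)) :=
    (hf t).tendsto.mono_left (nhdsWithin_mono t Ioi_subset_Ici_self)
  have h2 : ∃ᶠ s in 𝓝[>] t, f s ∈ ({0} : Set ℝ) := by
    rw [Filter.Frequently]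
    intro hcon
    have hmem : {s : ℝ | ¬ f s ∈ ({0} : Set ℝ)} ∈ 𝓝[>] t := hcon
    obtain ⟨u, hu, hsub⟩ := mem_nhdsGT_iff_exists_Ioo_subset.1 hmem
    have hnull : volume {s : ℝ | ¬ f s = 0} = 0 := by
      rw [← ae_iff.1 hae]
    have hle : volume (Ioo t u) ≤ 0 := by
      rw [← hnull]
      exact measure_mono hsub
    rw [Real.volume_Ioo] at hle
    simp only [nonpos_iff_eq_zero, ENNReal.ofReal_eq_zero] at hle
    linarith [mem_Ioi.1 hu]
  have := mem_closure_of_frequently_of_tendsto h2 h1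
  simpa using this

/-- The squared `L²` distance between the CDF of `W` and that of `-W` vanishes iff `W`
is symmetric about zero; and in that case `E|W₁+W₂| = E|W₁-W₂|` for i.i.d. copies. -/
theorem l2_dist_cdf_reflected_eq_zero_iff_symm {Ω : Type*} [MeasureSpace Ω]
    [IsProbabilityMeasure (ℙ : Measure Ω)]
    (W₁ W₂ : Ω → ℝ) (μ : Measure ℝ) [IsProbabilityMeasure μ]
    (hm₁ : Measurable W₁) (hm₂ : Measurable W₂)
    (hlaw₁ : Measure.map W₁ ℙ = μ) (hlaw₂ : Measure.map W₂ ℙ = μ)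
    (hindep : IndepFun W₁ W₂ ℙ)
    (hint : Integrable (fun x : ℝ => x) μ) :
    ((∫ t : ℝ, ((μ (Iic t)).toReal - ((μ.map (fun x : ℝ => -x)) (Iic t)).toReal) ^ 2 = 0)
        ↔ μ.map (fun x : ℝ => -x) = μ) ∧
      (μ.map (fun x : ℝ => -x) = μ →
        ∫ ω, |W₁ ω + W₂ ω| ∂ℙ = ∫ ω, |W₁ ω - W₂ ω| ∂ℙ) := by
  set ν : Measure ℝ := μ.map (fun x : ℝ => -x) with hν
  haveI : IsProbabilityMeasure ν := Measure.isProbabilityMeasure_map measurable_neg.aemeasurable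
  have hintν : Integrable (fun x : ℝ => x) ν := by
    rw [hν]
    exact (integrable_map_measure aestronglyMeasurable_id
      measurable_neg.aemeasurable).mpr hint.neg
  constructor
  · constructor
    · -- hard direction
      intro h0
      -- the integrand in terms of cdf
      have hcdfμ : ∀ t, (μ (Iic t)).toReal = cdf μ t := fun t => (cdf_eq_real μ t).symm
      have hcdfν : ∀ t, (ν (Iic t)).toReal = cdf ν t := fun t => (cdf_eq_real ν t).symm
      set D : ℝ → ℝ := fun t => cdf μ t - cdf ν t with hD
      have hDmeas : Measurable D :=
        ((monotone_cdf μ).measurable.sub (monotone_cdf ν).measurable)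
      have hDle : ∀ t, |D t| ≤ 1 := by
        intro t
        rw [abs_sub_le_iff]
        constructor
        · linarith [cdf_le_one μ t, cdf_nonneg ν t]
        · linarith [cdf_le_one ν t, cdf_nonneg μ t]
      -- Integrability of D
      have hDint : Integrable D := by
        refine ⟨hDmeas.aestronglyMeasurable, ?_⟩
        rw [hasFiniteIntegral_iff_norm]
        rw [← lintegral_add_compl (f := fun t => ENNReal.ofReal ‖D t‖)
          (measurableSet_Iio (a := (0:ℝ))), compl_Iio]
        have h1 : ∫⁻ t in Iio (0:ℝ), ENNReal.ofReal ‖D t‖ < ⊤ := by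
          have hb : ∀ t ∈ Iio (0:ℝ), ENNReal.ofReal ‖D t‖ ≤ μ (Iic t) + ν (Iic t) := by
            intro t _
            have : ‖D t‖ ≤ cdf μ t + cdf ν t := by
              rw [Real.norm_eq_abs, abs_sub_le_iff]
              constructor <;> linarith [cdf_nonneg μ t, cdf_nonneg ν t]
            calc ENNReal.ofReal ‖D t‖ ≤ ENNReal.ofReal (cdf μ t + cdf ν t) :=
                  ENNReal.ofReal_le_ofReal this
              _ ≤ ENNReal.ofReal (cdf μ t) + ENNReal.ofReal (cdf ν t) :=
                  ENNReal.ofReal_add_le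
              _ = μ (Iic t) + ν (Iic t) := by rw [ofReal_cdf, ofReal_cdf]
          calc ∫⁻ t in Iio (0:ℝ), ENNReal.ofReal ‖D t‖
              ≤ ∫⁻ t in Iio (0:ℝ), (μ (Iic t) + ν (Iic t)) :=
                setLIntegral_mono' measurableSet_Iio hb
            _ = (∫⁻ t in Iio (0:ℝ), μ (Iic t)) + ∫⁻ t in Iio (0:ℝ), ν (Iic t) := by
                refine lintegral_add_left ?_ _
                exact Monotone.measurable fun a b hab => measure_mono (Iic_subset_Iic.2 hab)
            _ < ⊤ := ENNReal.add_lt_top.2 ⟨tail_left μ hint, tail_left ν hintν⟩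
        have h2 : ∫⁻ t in Ici (0:ℝ), ENNReal.ofReal ‖D t‖ < ⊤ := by
          have hofμ : ∀ t, ENNReal.ofReal (1 - cdf μ t) = μ (Ioi t) := by
            intro t
            rw [← compl_Iic, measure_compl measurableSet_Iic (measure_ne_top _ _),
              measure_univ, ← ofReal_cdf μ t, ENNReal.ofReal_sub _ (cdf_nonneg μ t),
              ENNReal.ofReal_one]
          have hofν : ∀ t, ENNReal.ofReal (1 - cdf ν t) = ν (Ioi t) := by
            intro t
            rw [← compl_Iic, measure_compl measurableSet_Iic (measure_ne_top _ _),
              measure_univ, ← ofReal_cdf ν t, ENNReal.ofReal_sub _ (cdf_nonneg ν t),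
              ENNReal.ofReal_one]
          have hb : ∀ t ∈ Ici (0:ℝ), ENNReal.ofReal ‖D t‖ ≤ μ (Ioi t) + ν (Ioi t) := by
            intro t _
            have habs : ‖D t‖ ≤ (1 - cdf μ t) + (1 - cdf ν t) := by
              rw [Real.norm_eq_abs]
              have h1' : cdf μ t ≤ 1 := cdf_le_one μ t
              have h2' : cdf ν t ≤ 1 := cdf_le_one ν t
              rw [abs_sub_le_iff]
              constructor <;> linarith
            calc ENNReal.ofReal ‖D t‖
                ≤ ENNReal.ofReal ((1 - cdf μ t) + (1 - cdf ν t)) :=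
                  ENNReal.ofReal_le_ofReal habs
              _ ≤ ENNReal.ofReal (1 - cdf μ t) + ENNReal.ofReal (1 - cdf ν t) :=
                  ENNReal.ofReal_add_le
              _ = μ (Ioi t) + ν (Ioi t) := by rw [hofμ, hofν]
          have hIciIoi : ∀ (ρ : Measure ℝ),
              (∫⁻ t in Ici (0:ℝ), ρ (Ioi t)) = ∫⁻ t in Ioi (0:ℝ), ρ (Ioi t) :=
            fun ρ => (setLIntegral_congr (Ioi_ae_eq_Ici (a := (0:ℝ)))).symm
          calc ∫⁻ t in Ici (0:ℝ), ENNReal.ofReal ‖D t‖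
              ≤ ∫⁻ t in Ici (0:ℝ), (μ (Ioi t) + ν (Ioi t)) :=
                setLIntegral_mono' measurableSet_Ici hb
            _ = (∫⁻ t in Ici (0:ℝ), μ (Ioi t)) + ∫⁻ t in Ici (0:ℝ), ν (Ioi t) := by
                refine lintegral_add_left ?_ _
                exact Antitone.measurable fun a b hab => measure_mono (Ioi_subset_Ioi hab)
            _ = (∫⁻ t in Ioi (0:ℝ), μ (Ioi t)) + ∫⁻ t in Ioi (0:ℝ), ν (Ioi t) := by
                rw [hIciIoi μ, hIciIoi ν]
            _ < ⊤ := ENNReal.add_lt_top.2 ⟨tail_right μ hint, tail_right ν hintν⟩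
        exact ENNReal.add_lt_top.2 ⟨h1, h2⟩
      -- Integrability of D^2
      have hsq : Integrable (fun t => D t ^ 2) := by
        refine hDint.abs.mono' (hDmeas.pow_const 2).aestronglyMeasurable ?_
        refine Filter.Eventually.of_forall fun t => ?_
        rw [Real.norm_eq_abs, abs_pow, sq]
        calc |D t| * |D t| ≤ 1 * |D t| :=
              mul_le_mul_of_nonneg_right (hDle t) (abs_nonneg _)
          _ = |D t| := one_mul _
        
      -- integral zero → a.e. zero
      have h0' : ∫ t, D t ^ 2 = 0 := by
        rw [← h0]
        congr 1
        ext t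
        rw [hcdfμ, hcdfν]
      have hae : ∀ᵐ t : ℝ, D t ^ 2 = 0 :=
        (integral_eq_zero_iff_of_nonneg (fun t => sq_nonneg (D t)) hsq).1 h0'
      have haeD : ∀ᵐ t : ℝ, D t = 0 := by
        filter_upwards [hae] with t ht
        exact pow_eq_zero_iff (two_ne_zero) |>.1 ht
      have hall : ∀ t, D t = 0 := by
        refine eq_zero_of_right_cont (fun x => ?_) haeD
        exact ((cdf μ).right_continuous x).sub ((cdf ν).right_continuous x)
      have hcdf_eq : cdf ν = cdf μ := by
        ext t
        have := hall t
        simp only [hD, sub_eq_zero] at this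
        exact this.symm
      exact Measure.eq_of_cdf ν μ hcdf_eq
    · intro h
      rw [h]
      simp
  · intro hsym
    have hpair : Measure.map (fun ω => (W₁ ω, W₂ ω)) ℙ = μ.prod μ := by
      rw [(indepFun_iff_map_prod_eq_prod_map_map hm₁.aemeasurable hm₂.aemeasurable).1 hindep,
        hlaw₁, hlaw₂]
    have hmp : Measurable fun p : ℝ × ℝ => |p.1 + p.2| :=
      (measurable_fst.add measurable_snd).abs
    have hmm : Measurable fun p : ℝ × ℝ => |p.1 - p.2| :=
      (measurable_fst.sub measurable_snd).abs
    have e1 : ∫ ω, |W₁ ω + W₂ ω| ∂ℙ = ∫ p : ℝ × ℝ, |p.1 + p.2| ∂(μ.prod μ) := by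
      rw [← hpair, integral_map (hm₁.prodMk hm₂).aemeasurable hmp.aestronglyMeasurable]
    have e2 : ∫ ω, |W₁ ω - W₂ ω| ∂ℙ = ∫ p : ℝ × ℝ, |p.1 - p.2| ∂(μ.prod μ) := by
      rw [← hpair, integral_map (hm₁.prodMk hm₂).aemeasurable hmm.aestronglyMeasurable]
    have e3 : μ.prod μ = Measure.map (Prod.map (id : ℝ → ℝ) (fun x : ℝ => -x)) (μ.prod μ) := by
      nth_rewrite 2 [← hsym]
      nth_rewrite 1 [← Measure.map_id (μ := μ)]
      exact Measure.map_prod_map μ μ measurable_id measurable_neg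
    rw [e1, e2]
    calc ∫ p : ℝ × ℝ, |p.1 + p.2| ∂(μ.prod μ)
        = ∫ p : ℝ × ℝ, |p.1 + p.2|
            ∂(Measure.map (Prod.map (id : ℝ → ℝ) (fun x : ℝ => -x)) (μ.prod μ)) := by
          rw [← e3]
      _ = ∫ p : ℝ × ℝ, |p.1 + -p.2| ∂(μ.prod μ) := by
          rw [integral_map (measurable_id.prodMap measurable_neg).aemeasurable
            hmp.aestronglyMeasurable]
          rfl
      _ = ∫ p : ℝ × ℝ, |p.1 - p.2| ∂(μ.prod μ) := by
          simp only [sub_eq_add_neg]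
end

section
/- (2-identifiability of the finite part) Let Y take values μ₁ < μ₂ with probabilities λ₁, λ₂ where λ₁ ∉ {0, 1/2, 1}, and let Y′ take values μ′₁ < μ′₂ with probabilities λ′₁, λ′₂, with Y, Y′ independent. If Y − Y′ is symmetric about zero, then λ = λ′ and μ = μ′. -/
open MeasureTheory

/-- Auxiliary: weight function of the two-point difference distribution. -/
noncomputable def g4 (l₁ l₂ l₁' l₂' m₁ m₂ m₁' m₂' x : ℝ) : ℝ :=
  (if m₁ - m₁' = x then l₁ * l₁' else 0) + (if m₁ - m₂' = x then l₁ * l₂' else 0)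
    + (if m₂ - m₁' = x then l₂ * l₁' else 0) + (if m₂ - m₂' = x then l₂ * l₂' else 0)

set_option maxHeartbeats 2000000 in
lemma g4_ident (l₁ l₂ l₁' l₂' m₁ m₂ m₁' m₂' : ℝ)
    (h1 : 0 ≤ l₁) (h2 : 0 ≤ l₂) (hs : l₁ + l₂ = 1)
    (h1' : 0 ≤ l₁') (h2' : 0 ≤ l₂') (hs' : l₁' + l₂' = 1)
    (hn0 : l₁ ≠ 0) (hnh : l₁ ≠ 1 / 2) (hn1 : l₁ ≠ 1)
    (hm : m₁ < m₂) (hm' : m₁' < m₂')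
    (H : ∀ x : ℝ, g4 l₁ l₂ l₁' l₂' m₁ m₂ m₁' m₂' (-x) = g4 l₁ l₂ l₁' l₂' m₁ m₂ m₁' m₂' x) :
    l₁ = l₁' ∧ l₂ = l₂' ∧ m₁ = m₁' ∧ m₂ = m₂' := by
  have hl1 : 0 < l₁ := h1.lt_of_ne (Ne.symm hn0)
  have hl2 : 0 < l₂ := by
    rcases lt_or_eq_of_le h2 with h | h
    · exact h
    · exact absurd (by linarith : l₁ = 1) hn1
  rcases hnh.lt_or_gt with h12 | h12
  all_goals {
  -- generic evaluations
  have hGb : g4 l₁ l₂ l₁' l₂' m₁ m₂ m₁' m₂' (m₁ - m₂') = l₁ * l₂' := by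
    have e1 : ¬(m₁ - m₁' = m₁ - m₂') := by intro h; linarith
    have e3 : ¬(m₂ - m₁' = m₁ - m₂') := by intro h; linarith
    have e4 : ¬(m₂ - m₂' = m₁ - m₂') := by intro h; linarith
    simp [g4, e1, e3, e4]
  have hGc : g4 l₁ l₂ l₁' l₂' m₁ m₂ m₁' m₂' (m₂ - m₁') = l₂ * l₁' := by
    have e1 : ¬(m₁ - m₁' = m₂ - m₁') := by intro h; linarith
    have e2 : ¬(m₁ - m₂' = m₂ - m₁') := by intro h; linarith
    have e4 : ¬(m₂ - m₂' = m₂ - m₁') := by intro h; linarith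
    simp [g4, e1, e2, e4]
  by_cases h0' : l₁' = 0
  · -- degenerate: Y' = δ_{m₂'}, contradiction
    exfalso
    have h2'' : l₂' = 1 := by linarith
    have hGsimp : ∀ x : ℝ, g4 l₁ l₂ l₁' l₂' m₁ m₂ m₁' m₂' x
        = (if m₁ - m₂' = x then l₁ else 0) + (if m₂ - m₂' = x then l₂ else 0) := by
      intro x
      simp only [g4, h0', h2'', mul_zero, mul_one, ite_self]
      ring
    rcases lt_trichotomy (m₁ - m₂') 0 with hb0 | hb0 | hb0
    · have hd := H (m₁ - m₂')
      rw [hGsimp, hGsimp] at hd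
      clear H hGsimp hGb hGc
      split_ifs at hd <;> first | linarith | simp_all
    · have hd := H (m₂ - m₂')
      rw [hGsimp, hGsimp] at hd
      clear H hGsimp hGb hGc
      split_ifs at hd <;> first | linarith | simp_all
    · have hd := H (m₁ - m₂')
      rw [hGsimp, hGsimp] at hd
      clear H hGsimp hGb hGc
      split_ifs at hd <;> first | linarith | simp_all
  by_cases h1'' : l₁' = 1
  · -- degenerate: Y' = δ_{m₁'}, contradiction
    exfalso
    have h2'' : l₂' = 0 := by linarith
    have hGsimp : ∀ x : ℝ, g4 l₁ l₂ l₁' l₂' m₁ m₂ m₁' m₂' x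
        = (if m₁ - m₁' = x then l₁ else 0) + (if m₂ - m₁' = x then l₂ else 0) := by
      intro x
      simp only [g4, h1'', h2'', mul_zero, mul_one, ite_self]
      ring
    rcases lt_trichotomy (m₁ - m₁') 0 with ha0 | ha0 | ha0
    · have hd := H (m₁ - m₁')
      rw [hGsimp, hGsimp] at hd
      clear H hGsimp hGb hGc
      split_ifs at hd <;> first | linarith | simp_all
    · have hd := H (m₂ - m₁')
      rw [hGsimp, hGsimp] at hd
      clear H hGsimp hGb hGc
      split_ifs at hd <;> first | linarith | simp_all
    · have hd := H (m₁ - m₁')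
      rw [hGsimp, hGsimp] at hd
      clear H hGsimp hGb hGc
      split_ifs at hd <;> first | linarith | simp_all
  -- main case : 0 < l₁' < 1
  have hl1' : 0 < l₁' := h1'.lt_of_ne (Ne.symm h0')
  have hl2' : 0 < l₂' := by
    rcases lt_or_eq_of_le h2' with h | h
    · exact h
    · exact absurd (by linarith : l₁' = 1) h1''
  have supp : ∀ x : ℝ, g4 l₁ l₂ l₁' l₂' m₁ m₂ m₁' m₂' x ≠ 0 →
      (m₁ - m₁' = x ∨ m₁ - m₂' = x ∨ m₂ - m₁' = x ∨ m₂ - m₂' = x) := by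
    intro x hx
    by_contra hcon
    push_neg at hcon
    obtain ⟨e1, e2, e3, e4⟩ := hcon
    apply hx
    simp only [g4]
    rw [if_neg e1, if_neg e2, if_neg e3, if_neg e4]
    ring
  have hbc1 : m₁ - m₂' ≤ -(m₂ - m₁') := by
    have hne : g4 l₁ l₂ l₁' l₂' m₁ m₂ m₁' m₂' (-(m₂ - m₁')) ≠ 0 := by
      rw [H (m₂ - m₁'), hGc]
      exact (mul_pos hl2 hl1').ne'
    rcases supp _ hne with h | h | h | h <;> linarith
  have hbc2 : -(m₁ - m₂') ≤ m₂ - m₁' := by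
    have hne : g4 l₁ l₂ l₁' l₂' m₁ m₂ m₁' m₂' (-(m₁ - m₂')) ≠ 0 := by
      rw [H (m₁ - m₂'), hGb]
      exact (mul_pos hl1 hl2').ne'
    rcases supp _ hne with h | h | h | h <;> linarith
  have hkey : m₁ + m₂ = m₁' + m₂' := by linarith
  have hw : l₂ * l₁' = l₁ * l₂' := by
    have hb := H (m₁ - m₂')
    rw [hGb, show -(m₁ - m₂') = m₂ - m₁' by linarith, hGc] at hb
    exact hb
  have hll : l₁' = l₁ := by
    have e2 : l₂ = 1 - l₁ := by linarith
    have e2' : l₂' = 1 - l₁' := by linarith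
    rw [e2, e2'] at hw
    linear_combination hw
  by_cases had : m₁ - m₁' = m₂ - m₂'
  · exact ⟨hll.symm, by linarith, by linarith, by linarith⟩
  · exfalso
    have hGa : g4 l₁ l₂ l₁' l₂' m₁ m₂ m₁' m₂' (m₁ - m₁') = l₁ * l₁' := by
      have e2 : ¬(m₁ - m₂' = m₁ - m₁') := by intro h; linarith
      have e3 : ¬(m₂ - m₁' = m₁ - m₁') := by intro h; linarith
      have e4 : ¬(m₂ - m₂' = m₁ - m₁') := fun h => had h.symm
      simp [g4, e2, e3, e4]
    have hGd : g4 l₁ l₂ l₁' l₂' m₁ m₂ m₁' m₂' (m₂ - m₂') = l₂ * l₂' := by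
      have e2 : ¬(m₁ - m₂' = m₂ - m₂') := by intro h; linarith
      have e3 : ¬(m₂ - m₁' = m₂ - m₂') := by intro h; linarith
      simp [g4, had, e2, e3]
    have ha := H (m₁ - m₁')
    rw [hGa, show -(m₁ - m₁') = m₂ - m₂' by linarith, hGd] at ha
    have e2 : l₂ = 1 - l₁ := by linarith
    have e2' : l₂' = 1 - l₁ := by linarith
    rw [e2, e2', hll] at ha
    exact hnh (by linear_combination (-(1/2 : ℝ)) * ha)
  }

/-- 2-identifiability of the finite part: if `Y ~ λ₁δ_{μ₁} + λ₂δ_{μ₂}` with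
`λ₁ ∉ {0, 1/2, 1}` and `Y' ~ λ₁'δ_{μ₁'} + λ₂'δ_{μ₂'}` are independent and `Y - Y'` is
symmetric about zero, then the parameters coincide. -/
theorem two_point_identifiability
    (l₁ l₂ l₁' l₂' : ℝ) (m₁ m₂ m₁' m₂' : ℝ)
    (hl : 0 ≤ l₁ ∧ 0 ≤ l₂ ∧ l₁ + l₂ = 1) (hl' : 0 ≤ l₁' ∧ 0 ≤ l₂' ∧ l₁' + l₂' = 1)
    (hnot : l₁ ≠ 0 ∧ l₁ ≠ 1 / 2 ∧ l₁ ≠ 1)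
    (hm : m₁ < m₂) (hm' : m₁' < m₂')
    (hsym :
      (Measure.map (fun p : ℝ × ℝ => p.1 - p.2)
          ((ENNReal.ofReal l₁ • Measure.dirac m₁ + ENNReal.ofReal l₂ • Measure.dirac m₂).prod
            (ENNReal.ofReal l₁' • Measure.dirac m₁' +
              ENNReal.ofReal l₂' • Measure.dirac m₂'))).map (fun x : ℝ => -x) =
        Measure.map (fun p : ℝ × ℝ => p.1 - p.2)
          ((ENNReal.ofReal l₁ • Measure.dirac m₁ + ENNReal.ofReal l₂ • Measure.dirac m₂).prod
            (ENNReal.ofReal l₁' • Measure.dirac m₁' +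
              ENNReal.ofReal l₂' • Measure.dirac m₂'))) :
    l₁ = l₁' ∧ l₂ = l₂' ∧ m₁ = m₁' ∧ m₂ = m₂' := by
  obtain ⟨h1, h2, hs⟩ := hl
  obtain ⟨h1', h2', hs'⟩ := hl'
  obtain ⟨hn0, hnh, hn1⟩ := hnot
  set μ : Measure ℝ := ENNReal.ofReal l₁ • Measure.dirac m₁ + ENNReal.ofReal l₂ • Measure.dirac m₂ with hμ
  set μ' : Measure ℝ := ENNReal.ofReal l₁' • Measure.dirac m₁' + ENNReal.ofReal l₂' • Measure.dirac m₂' with hμ'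
  haveI i1 : IsFiniteMeasure ((ENNReal.ofReal l₁' • Measure.dirac m₁' : Measure ℝ)) :=
    ⟨by simp [ENNReal.ofReal_lt_top]⟩
  haveI i2 : IsFiniteMeasure ((ENNReal.ofReal l₂' • Measure.dirac m₂' : Measure ℝ)) :=
    ⟨by simp [ENNReal.ofReal_lt_top]⟩
  haveI : SFinite μ' := by rw [hμ']; infer_instance
  have hite : ∀ (c : Prop) (inst : Decidable c) (r : ℝ), 0 ≤ r → 0 ≤ @ite ℝ c inst r 0 := by
    intro c inst r hr
    split <;> simp [hr]
  have hnn : ∀ y : ℝ,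
      0 ≤ l₁ * ((if m₁' = m₁ - y then l₁' else 0) + (if m₂' = m₁ - y then l₂' else 0))
        + l₂ * ((if m₁' = m₂ - y then l₁' else 0) + (if m₂' = m₂ - y then l₂' else 0)) :=
    fun y => add_nonneg
      (mul_nonneg h1 (add_nonneg (hite _ _ _ h1') (hite _ _ _ h2')))
      (mul_nonneg h2 (add_nonneg (hite _ _ _ h1') (hite _ _ _ h2')))
  have hμ'z : ∀ z : ℝ, μ' {z}
      = ENNReal.ofReal ((if m₁' = z then l₁' else 0) + (if m₂' = z then l₂' else 0)) := by
    intro z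
    rw [hμ', Measure.add_apply, Measure.smul_apply, Measure.smul_apply,
      Measure.dirac_apply, Measure.dirac_apply]
    simp only [Set.indicator_apply, Set.mem_singleton_iff, Pi.one_apply, smul_eq_mul]
    split_ifs <;> simp [ENNReal.ofReal_add, h1', h2']
  have hsingle : ∀ y : ℝ,
      Measure.map (fun p : ℝ × ℝ => p.1 - p.2) (μ.prod μ') {y}
        = ENNReal.ofReal (l₁ * ((if m₁' = m₁ - y then l₁' else 0) + (if m₂' = m₁ - y then l₂' else 0))
            + l₂ * ((if m₁' = m₂ - y then l₁' else 0) + (if m₂' = m₂ - y then l₂' else 0))) := by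
    intro y
    rw [Measure.map_apply (show Measurable (fun p : ℝ × ℝ => p.1 - p.2) from measurable_fst.sub measurable_snd) (measurableSet_singleton y)]
    rw [Measure.prod_apply ((show Measurable (fun p : ℝ × ℝ => p.1 - p.2) from measurable_fst.sub measurable_snd) (measurableSet_singleton y))]
    have hpre : ∀ x : ℝ, (Prod.mk x ⁻¹' ((fun p : ℝ × ℝ => p.1 - p.2) ⁻¹' {y})) = {x - y} := by
      intro x
      ext z
      simp only [Set.mem_preimage, Set.mem_singleton_iff]
      constructor <;> intro h <;> linarith
    simp only [hpre]
    rw [hμ, lintegral_add_measure, lintegral_smul_measure, lintegral_smul_measure,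
      lintegral_dirac, lintegral_dirac, hμ'z, hμ'z, smul_eq_mul, smul_eq_mul,
      ← ENNReal.ofReal_mul h1, ← ENNReal.ofReal_mul h2,
      ← ENNReal.ofReal_add (mul_nonneg h1 (add_nonneg (hite _ _ _ h1') (hite _ _ _ h2')))
        (mul_nonneg h2 (add_nonneg (hite _ _ _ h1') (hite _ _ _ h2')))]
  have hGsym : ∀ x : ℝ,
      l₁ * ((if m₁' = m₁ - -x then l₁' else 0) + (if m₂' = m₁ - -x then l₂' else 0))
        + l₂ * ((if m₁' = m₂ - -x then l₁' else 0) + (if m₂' = m₂ - -x then l₂' else 0))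
      = l₁ * ((if m₁' = m₁ - x then l₁' else 0) + (if m₂' = m₁ - x then l₂' else 0))
        + l₂ * ((if m₁' = m₂ - x then l₁' else 0) + (if m₂' = m₂ - x then l₂' else 0)) := by
    intro x
    have h0 : (Measure.map (fun p : ℝ × ℝ => p.1 - p.2) (μ.prod μ')).map (fun x : ℝ => -x) {x}
        = Measure.map (fun p : ℝ × ℝ => p.1 - p.2) (μ.prod μ') {x} := by rw [hsym]
    rw [Measure.map_apply measurable_neg (measurableSet_singleton x)] at h0
    have hpre : (fun a : ℝ => -a) ⁻¹' {x} = {-x} := by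
      ext z
      simp only [Set.mem_preimage, Set.mem_singleton_iff, neg_eq_iff_eq_neg]
    rw [hpre, hsingle, hsingle] at h0
    exact (ENNReal.ofReal_eq_ofReal_iff (hnn (-x)) (hnn x)).mp h0
  have conv : ∀ u v w : ℝ, (u = v - w) = (v - u = w) :=
    fun u v w => propext ⟨fun h => by linarith, fun h => by linarith⟩
  have H : ∀ x : ℝ, g4 l₁ l₂ l₁' l₂' m₁ m₂ m₁' m₂' (-x) = g4 l₁ l₂ l₁' l₂' m₁ m₂ m₁' m₂' x := by
    intro x
    have hx := hGsym x
    simp only [conv, mul_add, mul_ite, mul_zero] at hx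
    simp only [g4]
    linarith
  exact g4_ident l₁ l₂ l₁' l₂' m₁ m₂ m₁' m₂' h1 h2 hs h1' h2' hs' hn0 hnh hn1 hm hm' H
end

section
/- If Y − Y′ is symmetric about zero for independent finitely supported Y, Y′ with ordered supports, then the extreme support points satisfy μ_k − μ′₁ = μ′_k − μ₁ and the extreme masses satisfy λ₁ λ′_k = λ′₁ λ_k. -/
open MeasureTheory Finset ENNReal

lemma eval_singleton {k : ℕ} (lam lam' : Fin k → ℝ) (mu mu' : Fin k → ℝ) (x : ℝ) :
    (Measure.map (fun p : ℝ × ℝ => p.1 - p.2)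
        ((∑ j, ENNReal.ofReal (lam j) • Measure.dirac (mu j)).prod
          (∑ j, ENNReal.ofReal (lam' j) • Measure.dirac (mu' j)))) {x} =
    ∑ i, ∑ j, (if mu i - mu' j = x then
        ENNReal.ofReal (lam i) * ENNReal.ofReal (lam' j) else 0) := by
  have hf : Measurable fun p : ℝ × ℝ => p.1 - p.2 := measurable_fst.sub measurable_snd
  set ν' : Measure ℝ := ∑ j, ENNReal.ofReal (lam' j) • Measure.dirac (mu' j) with hν'def
  haveI : IsFiniteMeasure ν' := by
    constructor
    rw [hν'def]
    simp only [Measure.coe_finset_sum, Finset.sum_apply, Measure.smul_apply, smul_eq_mul]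
    refine ENNReal.sum_lt_top.2 fun j _ => ?_
    simp [ENNReal.mul_lt_top, ENNReal.ofReal_lt_top]
  rw [Measure.map_apply hf (measurableSet_singleton x)]
  rw [Measure.prod_apply (hf (measurableSet_singleton x))]
  rw [lintegral_finset_sum_measure]
  refine Finset.sum_congr rfl fun i _ => ?_
  rw [lintegral_smul_measure, lintegral_dirac]
  have : ν' (Prod.mk (mu i) ⁻¹' ((fun p : ℝ × ℝ => p.1 - p.2) ⁻¹' {x})) =
      ∑ j, (if mu i - mu' j = x then ENNReal.ofReal (lam' j) else 0) := by
    rw [hν'def]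
    simp only [Measure.coe_finset_sum, Finset.sum_apply, Measure.smul_apply, smul_eq_mul]
    refine Finset.sum_congr rfl fun j _ => ?_
    rw [Measure.dirac_apply']
    · by_cases h : mu i - mu' j = x <;>
        simp [Set.indicator, Set.mem_preimage, h]
    · exact measurable_prodMk_left (hf (measurableSet_singleton x))
  rw [this, smul_eq_mul, Finset.mul_sum]
  exact Finset.sum_congr rfl fun j _ => by by_cases h : mu i - mu' j = x <;> simp [h]

lemma sum_at_max {k : ℕ} (hk : 0 < k) (c c' : Fin k → ℝ≥0∞) (mu mu' : Fin k → ℝ)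
    (hmono : StrictMono mu) (hmono' : StrictMono mu') :
    ∑ i, ∑ j, (if mu i - mu' j = mu ⟨k - 1, Nat.sub_lt hk one_pos⟩ - mu' ⟨0, hk⟩
        then c i * c' j else 0) = c ⟨k - 1, Nat.sub_lt hk one_pos⟩ * c' ⟨0, hk⟩ := by
  set kk : Fin k := ⟨k - 1, Nat.sub_lt hk one_pos⟩
  set z0 : Fin k := ⟨0, hk⟩
  have hle : ∀ i : Fin k, z0 ≤ i := fun i => by
    rw [Fin.le_def]; exact Nat.zero_le _
  have hge : ∀ i : Fin k, i ≤ kk := fun i => by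
    rw [Fin.le_def]; have := i.isLt; simp only [kk]; omega
  rw [Finset.sum_eq_single kk]
  · rw [Finset.sum_eq_single z0]
    · simp
    · intro j _ hj
      have h1 : mu' z0 < mu' j := hmono' (lt_of_le_of_ne (hle j) (Ne.symm hj))
      rw [if_neg (by intro h; nlinarith)]
    · intro h; exact absurd (Finset.mem_univ _) h
  · intro i _ hi
    have h1 : mu i < mu kk := hmono (lt_of_le_of_ne (hge i) hi)
    refine Finset.sum_eq_zero fun j _ => ?_
    have h2 : mu' z0 ≤ mu' j := hmono'.monotone (hle j)
    rw [if_neg (by intro h; nlinarith)]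
  · intro h; exact absurd (Finset.mem_univ _) h

lemma sum_pos_exists {k : ℕ} (c c' : Fin k → ℝ≥0∞) (mu mu' : Fin k → ℝ) (x : ℝ)
    (h : ∑ i, ∑ j, (if mu i - mu' j = x then c i * c' j else 0) ≠ 0) :
    ∃ i j : Fin k, mu i - mu' j = x := by
  by_contra hcon
  push_neg at hcon
  exact h (Finset.sum_eq_zero fun i _ => Finset.sum_eq_zero fun j _ => if_neg (hcon i j))

/-- If `Y - Y'` is symmetric about zero for independent finitely supported `Y, Y'` with
ordered supports, then the extreme support points satisfy `μ_k - μ'_1 = μ'_k - μ_1` and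
the extreme masses satisfy `λ₁ λ'_k = λ'₁ λ_k`. -/
theorem extreme_points_of_symmetric_difference (k : ℕ) (hk : 0 < k)
    (lam lam' : Fin k → ℝ) (mu mu' : Fin k → ℝ)
    (hlam : ∀ j, 0 ≤ lam j) (hlam' : ∀ j, 0 ≤ lam' j)
    (hsum : ∑ j, lam j = 1) (hsum' : ∑ j, lam' j = 1)
    (hmono : StrictMono mu) (hmono' : StrictMono mu')
    (hpos₁ : 0 < lam ⟨0, hk⟩) (hposk : 0 < lam ⟨k - 1, Nat.sub_lt hk one_pos⟩)
    (hpos₁' : 0 < lam' ⟨0, hk⟩) (hposk' : 0 < lam' ⟨k - 1, Nat.sub_lt hk one_pos⟩)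
    (hsym :
      (Measure.map (fun p : ℝ × ℝ => p.1 - p.2)
          ((∑ j, ENNReal.ofReal (lam j) • Measure.dirac (mu j)).prod
            (∑ j, ENNReal.ofReal (lam' j) • Measure.dirac (mu' j)))).map (fun x : ℝ => -x) =
        Measure.map (fun p : ℝ × ℝ => p.1 - p.2)
          ((∑ j, ENNReal.ofReal (lam j) • Measure.dirac (mu j)).prod
            (∑ j, ENNReal.ofReal (lam' j) • Measure.dirac (mu' j)))) :
    mu ⟨k - 1, Nat.sub_lt hk one_pos⟩ - mu' ⟨0, hk⟩ =
        mu' ⟨k - 1, Nat.sub_lt hk one_pos⟩ - mu ⟨0, hk⟩ ∧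
      lam ⟨0, hk⟩ * lam' ⟨k - 1, Nat.sub_lt hk one_pos⟩ =
        lam' ⟨0, hk⟩ * lam ⟨k - 1, Nat.sub_lt hk one_pos⟩ := by
  set kk : Fin k := ⟨k - 1, Nat.sub_lt hk one_pos⟩ with hkk
  set z0 : Fin k := ⟨0, hk⟩ with hz0
  set A := Measure.map (fun p : ℝ × ℝ => p.1 - p.2)
      ((∑ j, ENNReal.ofReal (lam j) • Measure.dirac (mu j)).prod
        (∑ j, ENNReal.ofReal (lam' j) • Measure.dirac (mu' j))) with hA
  have hle : ∀ i : Fin k, z0 ≤ i := fun i => by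
    rw [Fin.le_def]; exact Nat.zero_le _
  have hge : ∀ i : Fin k, i ≤ kk := fun i => by
    rw [Fin.le_def]; have := i.isLt; simp only [kk]; omega
  -- evaluation of A at symmetric singletons
  have key : ∀ x : ℝ, A {-x} = A {x} := by
    intro x
    have h1 : (A.map (fun y : ℝ => -y)) {x} = A {-x} := by
      rw [Measure.map_apply measurable_neg (measurableSet_singleton x)]
      congr 1
      ext y
      simp [neg_eq_iff_eq_neg, eq_comm]
    rw [← h1, hsym]
  set M : ℝ := mu kk - mu' z0 with hM
  set m : ℝ := mu z0 - mu' kk with hm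
  -- A at M
  have hAM : A {M} = ENNReal.ofReal (lam kk) * ENNReal.ofReal (lam' z0) := by
    rw [hA, eval_singleton]
    exact sum_at_max hk _ _ _ _ hmono hmono'
  -- A at m : flip the roles
  have hAm : A {m} = ENNReal.ofReal (lam z0) * ENNReal.ofReal (lam' kk) := by
    rw [hA, eval_singleton]
    have flip : ∀ i j : Fin k, (mu i - mu' j = m) ↔
        (mu' j - mu i = mu' kk - mu z0) := by
      intro i j; rw [hm]; constructor <;> intro h <;> linarith
    calc ∑ i, ∑ j, (if mu i - mu' j = m then
            ENNReal.ofReal (lam i) * ENNReal.ofReal (lam' j) else 0)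
        = ∑ j, ∑ i, (if mu' j - mu i = mu' kk - mu z0 then
            ENNReal.ofReal (lam' j) * ENNReal.ofReal (lam i) else 0) := by
          rw [Finset.sum_comm]
          exact Finset.sum_congr rfl fun j _ => Finset.sum_congr rfl fun i _ => by
            rw [if_congr (flip i j) (mul_comm _ _) rfl]
      _ = ENNReal.ofReal (lam' kk) * ENNReal.ofReal (lam z0) :=
          sum_at_max hk _ _ _ _ hmono' hmono
      _ = ENNReal.ofReal (lam z0) * ENNReal.ofReal (lam' kk) := mul_comm _ _
  have hAMpos : A {M} ≠ 0 := by
    rw [hAM]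
    exact mul_ne_zero (ENNReal.ofReal_pos.2 hposk).ne' (ENNReal.ofReal_pos.2 hpos₁').ne'
  have hAmpos : A {m} ≠ 0 := by
    rw [hAm]
    exact mul_ne_zero (ENNReal.ofReal_pos.2 hpos₁).ne' (ENNReal.ofReal_pos.2 hposk').ne'
  -- from symmetry, A {-M} ≠ 0, so some point equals -M, hence m ≤ -M
  have hbound : ∀ i j : Fin k, m ≤ mu i - mu' j ∧ mu i - mu' j ≤ M := by
    intro i j
    constructor
    · have := hmono.monotone (hle i); have := hmono'.monotone (hge j)
      rw [hm]; linarith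
    · have := hmono.monotone (hge i); have := hmono'.monotone (hle j)
      rw [hM]; linarith
  have hmM : m ≤ -M := by
    have h0 : A {-M} ≠ 0 := by rw [key M]; exact hAMpos
    rw [hA, eval_singleton] at h0
    obtain ⟨i, j, hij⟩ := sum_pos_exists _ _ _ _ _ h0
    have := (hbound i j).1; linarith
  have hMm : -m ≤ M := by
    have h0 : A {-m} ≠ 0 := by rw [key m]; exact hAmpos
    rw [hA, eval_singleton] at h0
    obtain ⟨i, j, hij⟩ := sum_pos_exists _ _ _ _ _ h0
    have := (hbound i j).2; linarith
  have hMeq : M = -m := le_antisymm (by linarith) (by linarith)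
  constructor
  · rw [hM, hm] at hMeq; linarith
  · -- A {-M} = A {M}, and -M = m
    have h1 : A {m} = A {M} := by rw [← key M, hMeq, neg_neg]
    rw [hAm, hAM, ← ENNReal.ofReal_mul (hlam _), ← ENNReal.ofReal_mul (hlam _)] at h1
    have h2 := (ENNReal.ofReal_eq_ofReal_iff
      (mul_nonneg (hlam _) (hlam' _)) (mul_nonneg (hlam _) (hlam' _))).1 h1
    linarith [h2]
end

section
/- (Case 1 symmetrization identity) For reals c, d, r with d > 0 and r > 1, let Y take values (c, c+4d, c+6d) with weights proportional to (r², r²−1, r), and Y′ take values (c+d, c+3d, c+5d) with weights proportional to (r, r+1, 1), with Y, Y′ independent. Then Y − Y′ is symmetric about zero; specifically it is supported on {−5d, −3d, −d, d, 3d, 5d} with weights proportional to (r², r³+r², r³+r²−1, r³+r²−1, r³+r², r²). -/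
open MeasureTheory ENNReal

lemma smul_prod' {α β : Type*} [MeasurableSpace α] [MeasurableSpace β]
    (c : ℝ≥0∞) (μ : Measure α) (ν : Measure β) [SFinite μ] [SFinite ν] :
    (c • μ).prod ν = c • μ.prod ν := by
  ext s hs
  rw [Measure.smul_apply, Measure.prod_apply hs, Measure.prod_apply hs,
    lintegral_smul_measure, smul_eq_mul]

lemma prod_smul' {α β : Type*} [MeasurableSpace α] [MeasurableSpace β]
    (c : ℝ≥0∞) (hc : c ≠ ⊤) (μ : Measure α) (ν : Measure β) [SFinite μ] [SFinite ν] :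
    μ.prod (c • ν) = c • μ.prod ν := by
  ext s hs
  rw [Measure.smul_apply, Measure.prod_apply hs, Measure.prod_apply hs, smul_eq_mul,
    ← lintegral_const_mul' c _ hc]
  simp

lemma piece (p q x y : ℝ) (hp : 0 ≤ p) :
    Measure.map (fun z : ℝ × ℝ => z.1 - z.2)
      ((ENNReal.ofReal p • Measure.dirac x).prod (ENNReal.ofReal q • Measure.dirac y)) =
    ENNReal.ofReal (p * q) • Measure.dirac (x - y) := by
  rw [smul_prod', prod_smul' _ ofReal_ne_top, Measure.dirac_prod_dirac, smul_smul,
    ← ENNReal.ofReal_mul hp, Measure.map_smul,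
    Measure.map_dirac' (f := fun z : ℝ × ℝ => z.1 - z.2) (measurable_fst.sub measurable_snd)]

/-- Case 1 symmetrization identity: with `Y` on `(c, c+4d, c+6d)` with weights
proportional to `(r², r²-1, r)` and `Y'` on `(c+d, c+3d, c+5d)` with weights proportional
to `(r, r+1, 1)`, independent, the difference `Y - Y'` is symmetric about zero and is
supported on `{-5d, -3d, -d, d, 3d, 5d}` with weights proportional to
`(r², r³+r², r³+r²-1, r³+r²-1, r³+r², r²)`. -/
theorem case1_symmetrization (c d r : ℝ) (hd : 0 < d) (hr : 1 < r) :
    let s : ℝ := r ^ 2 + (r ^ 2 - 1) + r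
    let s' : ℝ := r + (r + 1) + 1
    let T : ℝ := r ^ 2 + (r ^ 3 + r ^ 2) + (r ^ 3 + r ^ 2 - 1) + (r ^ 3 + r ^ 2 - 1) +
      (r ^ 3 + r ^ 2) + r ^ 2
    let ν : Measure ℝ := Measure.map (fun p : ℝ × ℝ => p.1 - p.2)
      ((ENNReal.ofReal (r ^ 2 / s) • Measure.dirac c +
          ENNReal.ofReal ((r ^ 2 - 1) / s) • Measure.dirac (c + 4 * d) +
          ENNReal.ofReal (r / s) • Measure.dirac (c + 6 * d)).prod
        (ENNReal.ofReal (r / s') • Measure.dirac (c + d) +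
          ENNReal.ofReal ((r + 1) / s') • Measure.dirac (c + 3 * d) +
          ENNReal.ofReal (1 / s') • Measure.dirac (c + 5 * d)))
    ν.map (fun x : ℝ => -x) = ν ∧
      ν = ENNReal.ofReal (r ^ 2 / T) • Measure.dirac (-(5 * d)) +
          ENNReal.ofReal ((r ^ 3 + r ^ 2) / T) • Measure.dirac (-(3 * d)) +
          ENNReal.ofReal ((r ^ 3 + r ^ 2 - 1) / T) • Measure.dirac (-d) +
          ENNReal.ofReal ((r ^ 3 + r ^ 2 - 1) / T) • Measure.dirac d +
          ENNReal.ofReal ((r ^ 3 + r ^ 2) / T) • Measure.dirac (3 * d) +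
          ENNReal.ofReal (r ^ 2 / T) • Measure.dirac (5 * d) := by
  intro s s' T ν
  have hr0 : (0:ℝ) < r := lt_trans one_pos hr
  have hs0 : (0:ℝ) < s := by show (0:ℝ) < r ^ 2 + (r ^ 2 - 1) + r; nlinarith
  have hs'0 : (0:ℝ) < s' := by show (0:ℝ) < r + (r + 1) + 1; nlinarith
  have hT : T = s * s' := by
    show r ^ 2 + (r ^ 3 + r ^ 2) + (r ^ 3 + r ^ 2 - 1) + (r ^ 3 + r ^ 2 - 1) +
      (r ^ 3 + r ^ 2) + r ^ 2 = (r ^ 2 + (r ^ 2 - 1) + r) * (r + (r + 1) + 1)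
    ring
  have hT0 : (0:ℝ) < T := by rw [hT]; positivity
  have h21 : (0:ℝ) ≤ r ^ 2 - 1 := by nlinarith
  have hp1 : (0:ℝ) ≤ r ^ 2 / s := by positivity
  have hp2 : (0:ℝ) ≤ (r ^ 2 - 1) / s := div_nonneg h21 hs0.le
  have hp3 : (0:ℝ) ≤ r / s := by positivity
  have hm : Measurable (fun p : ℝ × ℝ => p.1 - p.2) := measurable_fst.sub measurable_snd
  have cc : ∀ a b g : ℝ, a * b = g →
      ENNReal.ofReal (a / s * (b / s')) = ENNReal.ofReal (g / T) := by
    intro a b g hg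
    congr 1
    rw [hT, ← hg]
    field_simp
  have key : ν = ENNReal.ofReal (r ^ 2 / T) • Measure.dirac (-(5 * d)) +
          ENNReal.ofReal ((r ^ 3 + r ^ 2) / T) • Measure.dirac (-(3 * d)) +
          ENNReal.ofReal ((r ^ 3 + r ^ 2 - 1) / T) • Measure.dirac (-d) +
          ENNReal.ofReal ((r ^ 3 + r ^ 2 - 1) / T) • Measure.dirac d +
          ENNReal.ofReal ((r ^ 3 + r ^ 2) / T) • Measure.dirac (3 * d) +
          ENNReal.ofReal (r ^ 2 / T) • Measure.dirac (5 * d) := by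
    show Measure.map (fun p : ℝ × ℝ => p.1 - p.2) _ = _
    rw [Measure.prod_add, Measure.prod_add, Measure.add_prod, Measure.add_prod,
      Measure.add_prod, Measure.add_prod, Measure.add_prod, Measure.add_prod]
    rw [Measure.map_add _ _ hm, Measure.map_add _ _ hm, Measure.map_add _ _ hm,
      Measure.map_add _ _ hm, Measure.map_add _ _ hm, Measure.map_add _ _ hm,
      Measure.map_add _ _ hm, Measure.map_add _ _ hm]
    rw [piece _ _ _ _ hp1, piece _ _ _ _ hp1, piece _ _ _ _ hp1,
      piece _ _ _ _ hp2, piece _ _ _ _ hp2, piece _ _ _ _ hp2,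
      piece _ _ _ _ hp3, piece _ _ _ _ hp3, piece _ _ _ _ hp3]
    rw [cc _ _ (r ^ 3) (by ring), cc _ _ (r ^ 3 - r) (by ring),
      cc _ _ (r ^ 2) (by ring), cc _ _ (r ^ 3 + r ^ 2) (by ring),
      cc _ _ (r ^ 3 + r ^ 2 - r - 1) (by ring), cc _ _ (r ^ 2 + r) (by ring),
      cc _ _ (r ^ 2) (by ring), cc _ _ (r ^ 2 - 1) (by ring), cc _ _ r (by ring)]
    have e1 : c - (c + d) = -d := by ring
    have e2 : c - (c + 3 * d) = -(3 * d) := by ring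
    have e3 : c - (c + 5 * d) = -(5 * d) := by ring
    have e4 : c + 4 * d - (c + d) = 3 * d := by ring
    have e5 : c + 4 * d - (c + 3 * d) = d := by ring
    have e6 : c + 4 * d - (c + 5 * d) = -d := by ring
    have e7 : c + 6 * d - (c + d) = 5 * d := by ring
    have e8 : c + 6 * d - (c + 3 * d) = 3 * d := by ring
    have e9 : c + 6 * d - (c + 5 * d) = d := by ring
    rw [e1, e2, e3, e4, e5, e6, e7, e8, e9]
    have s1 : ENNReal.ofReal ((r ^ 3 + r ^ 2 - 1) / T) =
        ENNReal.ofReal (r ^ 3 / T) + ENNReal.ofReal ((r ^ 2 - 1) / T) := by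
      rw [← ENNReal.ofReal_add (by positivity) (div_nonneg h21 hT0.le)]
      congr 1; ring
    have s2 : ENNReal.ofReal ((r ^ 3 + r ^ 2 - 1) / T) =
        ENNReal.ofReal ((r ^ 3 + r ^ 2 - r - 1) / T) + ENNReal.ofReal (r / T) := by
      rw [← ENNReal.ofReal_add (div_nonneg (by nlinarith) hT0.le) (by positivity)]
      congr 1; ring
    have s3 : ENNReal.ofReal ((r ^ 3 + r ^ 2) / T) =
        ENNReal.ofReal ((r ^ 3 - r) / T) + ENNReal.ofReal ((r ^ 2 + r) / T) := by
      rw [← ENNReal.ofReal_add (div_nonneg (by nlinarith) hT0.le) (by positivity)]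
      congr 1; ring
    nth_rw 1 [s1]
    rw [s2]
    nth_rw 3 [s3]
    rw [add_smul, add_smul, add_smul]
    abel
  refine ⟨?_, key⟩
  rw [key]
  rw [Measure.map_add _ _ measurable_neg, Measure.map_add _ _ measurable_neg,
    Measure.map_add _ _ measurable_neg, Measure.map_add _ _ measurable_neg,
    Measure.map_add _ _ measurable_neg]
  simp only [Measure.map_smul, Measure.map_dirac' measurable_neg, neg_neg]
  abel
end

section
/- (Case 2 symmetrization identity) For reals c, d, r with d > 0 and r > 1, let Y take values (c, c+3d, c+4d) with weights proportional to (r√r, (r−1)√(r+1), √r), and Y′ take values (c+d, c+2d, c+3d) with weights proportional to (r, √(r+r²), 1), with Y, Y′ independent. Then Y − Y′ is symmetric about zero, supported on {−3d, −2d, −d, 0, d, 2d, 3d} with weights proportional to (r√r, r²√(r+1), r²√r, (r−1)√(r+1), r²√r, r²√(r+1), r√r). -/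
open MeasureTheory

lemma mySmulProd {α β : Type*} [MeasurableSpace α] [MeasurableSpace β]
    (c : ENNReal) (μ : Measure α) (ν : Measure β) [SFinite μ] [SFinite ν] :
    (c • μ).prod ν = c • μ.prod ν := by
  ext t ht
  simp [Measure.prod_apply ht, MeasureTheory.lintegral_smul_measure]

lemma myProdSmul {α β : Type*} [MeasurableSpace α] [MeasurableSpace β]
    (c : ENNReal) (μ : Measure α) (ν : Measure β) [SFinite μ] [SFinite ν] :
    μ.prod (c • ν) = c • μ.prod ν := by
  ext t ht
  simp only [Measure.prod_apply ht, Measure.smul_apply, smul_eq_mul]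
  exact lintegral_const_mul _ (measurable_measure_prodMk_left ht)

lemma myCombine {μ : Measure ℝ} {A B : ℝ} (hA : 0 ≤ A) (hB : 0 ≤ B) :
    ENNReal.ofReal A • μ + ENNReal.ofReal B • μ = ENNReal.ofReal (A + B) • μ := by
  rw [ENNReal.ofReal_add hA hB, add_smul]


/-- Case 2 symmetrization identity: with `Y` on `(c, c+3d, c+4d)` with weights
proportional to `(r√r, (r-1)√(r+1), √r)` and `Y'` on `(c+d, c+2d, c+3d)` with weights
proportional to `(r, √(r+r²), 1)`, independent, the difference `Y - Y'` is symmetric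
about zero, supported on `{-3d, -2d, -d, 0, d, 2d, 3d}` with weights proportional to
`(r√r, r²√(r+1), r²√r, (r-1)√(r+1), r²√r, r²√(r+1), r√r)`. -/
theorem case2_symmetrization (c d r : ℝ) (hd : 0 < d) (hr : 1 < r) :
    let s : ℝ := r * Real.sqrt r + (r - 1) * Real.sqrt (r + 1) + Real.sqrt r
    let s' : ℝ := r + Real.sqrt (r + r ^ 2) + 1
    let T : ℝ := r * Real.sqrt r + r ^ 2 * Real.sqrt (r + 1) + r ^ 2 * Real.sqrt r +
      (r - 1) * Real.sqrt (r + 1) + r ^ 2 * Real.sqrt r + r ^ 2 * Real.sqrt (r + 1) +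
      r * Real.sqrt r
    let ν : Measure ℝ := Measure.map (fun p : ℝ × ℝ => p.1 - p.2)
      ((ENNReal.ofReal (r * Real.sqrt r / s) • Measure.dirac c +
          ENNReal.ofReal ((r - 1) * Real.sqrt (r + 1) / s) • Measure.dirac (c + 3 * d) +
          ENNReal.ofReal (Real.sqrt r / s) • Measure.dirac (c + 4 * d)).prod
        (ENNReal.ofReal (r / s') • Measure.dirac (c + d) +
          ENNReal.ofReal (Real.sqrt (r + r ^ 2) / s') • Measure.dirac (c + 2 * d) +
          ENNReal.ofReal (1 / s') • Measure.dirac (c + 3 * d)))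
    ν.map (fun x : ℝ => -x) = ν ∧
      ν = ENNReal.ofReal (r * Real.sqrt r / T) • Measure.dirac (-(3 * d)) +
          ENNReal.ofReal (r ^ 2 * Real.sqrt (r + 1) / T) • Measure.dirac (-(2 * d)) +
          ENNReal.ofReal (r ^ 2 * Real.sqrt r / T) • Measure.dirac (-d) +
          ENNReal.ofReal ((r - 1) * Real.sqrt (r + 1) / T) • Measure.dirac (0 : ℝ) +
          ENNReal.ofReal (r ^ 2 * Real.sqrt r / T) • Measure.dirac d +
          ENNReal.ofReal (r ^ 2 * Real.sqrt (r + 1) / T) • Measure.dirac (2 * d) +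
          ENNReal.ofReal (r * Real.sqrt r / T) • Measure.dirac (3 * d) := by
  intro s s' T ν
  have hr0 : (0:ℝ) < r := lt_trans one_pos hr
  have hx0 : (0:ℝ) ≤ Real.sqrt r := Real.sqrt_nonneg r
  have hy0 : (0:ℝ) ≤ Real.sqrt (r + 1) := Real.sqrt_nonneg _
  have hx : Real.sqrt r * Real.sqrt r = r := Real.mul_self_sqrt hr0.le
  have hy : Real.sqrt (r + 1) * Real.sqrt (r + 1) = r + 1 :=
    Real.mul_self_sqrt (by linarith)
  have hmul : Real.sqrt (r + r ^ 2) = Real.sqrt r * Real.sqrt (r + 1) := by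
    rw [← Real.sqrt_mul hr0.le]
    ring_nf
  have hxpos : (0:ℝ) < Real.sqrt r := Real.sqrt_pos.mpr hr0
  have hs : 0 < s := by
    have h1 : 0 < r * Real.sqrt r := mul_pos hr0 hxpos
    have h2 : 0 ≤ (r - 1) * Real.sqrt (r + 1) := mul_nonneg (by linarith) hy0
    unfold s
    linarith
  have hs' : 0 < s' := by
    have := Real.sqrt_nonneg (r + r ^ 2)
    unfold s'
    linarith
  have hT : T = s * s' := by
    unfold T s s'
    rw [hmul]
    linear_combination (-(r + 1) * Real.sqrt (r + 1)) * hx + (-(r - 1) * Real.sqrt r) * hy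
  have hT0 : 0 < T := by rw [hT]; exact mul_pos hs hs'
  -- nonnegativity of left coefficients
  have ha1 : (0:ℝ) ≤ r * Real.sqrt r / s := div_nonneg (mul_nonneg hr0.le hx0) hs.le
  have ha2 : (0:ℝ) ≤ (r - 1) * Real.sqrt (r + 1) / s :=
    div_nonneg (mul_nonneg (by linarith) hy0) hs.le
  have ha3 : (0:ℝ) ≤ Real.sqrt r / s := div_nonneg hx0 hs.le
  -- the nine ENNReal coefficient computations
  have key : ∀ a b C : ℝ, 0 ≤ a / s → a * b = C →
      ENNReal.ofReal (b / s') * ENNReal.ofReal (a / s) = ENNReal.ofReal (C / T) := by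
    intro a b C hnn hab
    rw [mul_comm, ← ENNReal.ofReal_mul hnn, div_mul_div_comm, hT, hab]
  have E11 := key (r * Real.sqrt r) r (r ^ 2 * Real.sqrt r) ha1 (by ring)
  have E12 := key (r * Real.sqrt r) (Real.sqrt (r + r ^ 2)) (r ^ 2 * Real.sqrt (r + 1)) ha1
    (by rw [hmul]; linear_combination (r * Real.sqrt (r + 1)) * hx)
  have E13 := key (r * Real.sqrt r) 1 (r * Real.sqrt r) ha1 (by ring)
  have E21 := key ((r - 1) * Real.sqrt (r + 1)) r (r * (r - 1) * Real.sqrt (r + 1)) ha2 (by ring)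
  have E22 := key ((r - 1) * Real.sqrt (r + 1)) (Real.sqrt (r + r ^ 2))
    ((r ^ 2 - 1) * Real.sqrt r) ha2 (by rw [hmul]; linear_combination ((r - 1) * Real.sqrt r) * hy)
  have E23 := key ((r - 1) * Real.sqrt (r + 1)) 1 ((r - 1) * Real.sqrt (r + 1)) ha2 (by ring)
  have E31 := key (Real.sqrt r) r (r * Real.sqrt r) ha3 (by ring)
  have E32 := key (Real.sqrt r) (Real.sqrt (r + r ^ 2)) (r * Real.sqrt (r + 1)) ha3
    (by rw [hmul]; linear_combination Real.sqrt (r + 1) * hx)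
  have E33 := key (Real.sqrt r) 1 (Real.sqrt r) ha3 (by ring)
  have hf : Measurable fun p : ℝ × ℝ => p.1 - p.2 := measurable_fst.sub measurable_snd
  have hmapadd : ∀ μ₁ μ₂ : Measure (ℝ × ℝ),
      (μ₁ + μ₂).map (fun p : ℝ × ℝ => p.1 - p.2) =
        μ₁.map (fun p : ℝ × ℝ => p.1 - p.2) + μ₂.map (fun p : ℝ × ℝ => p.1 - p.2) :=
    fun μ₁ μ₂ => Measure.map_add μ₁ μ₂ hf
  have hν : ν = ENNReal.ofReal (r * Real.sqrt r / T) • Measure.dirac (-(3 * d)) +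
      ENNReal.ofReal (r ^ 2 * Real.sqrt (r + 1) / T) • Measure.dirac (-(2 * d)) +
      ENNReal.ofReal (r ^ 2 * Real.sqrt r / T) • Measure.dirac (-d) +
      ENNReal.ofReal ((r - 1) * Real.sqrt (r + 1) / T) • Measure.dirac (0 : ℝ) +
      ENNReal.ofReal (r ^ 2 * Real.sqrt r / T) • Measure.dirac d +
      ENNReal.ofReal (r ^ 2 * Real.sqrt (r + 1) / T) • Measure.dirac (2 * d) +
      ENNReal.ofReal (r * Real.sqrt r / T) • Measure.dirac (3 * d) := by
    unfold ν
    rw [Measure.prod_add, Measure.prod_add]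
    rw [Measure.add_prod, Measure.add_prod, Measure.add_prod, Measure.add_prod,
      Measure.add_prod, Measure.add_prod]
    simp only [mySmulProd, myProdSmul, Measure.dirac_prod_dirac]
    simp only [hmapadd, Measure.map_smul, Measure.map_dirac' hf]
    simp only [smul_smul]
    rw [E11, E12, E13, E21, E22, E23, E31, E32, E33]
    rw [show c - (c + d) = -d from by ring, show c - (c + 2 * d) = -(2 * d) from by ring,
      show c - (c + 3 * d) = -(3 * d) from by ring,
      show c + 3 * d - (c + d) = 2 * d from by ring,
      show c + 3 * d - (c + 2 * d) = d from by ring,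
      show c + 3 * d - (c + 3 * d) = (0:ℝ) from by ring,
      show c + 4 * d - (c + d) = 3 * d from by ring,
      show c + 4 * d - (c + 2 * d) = 2 * d from by ring,
      show c + 4 * d - (c + 3 * d) = d from by ring]
    have md : (ENNReal.ofReal (r ^ 2 * Real.sqrt r / T) • Measure.dirac (d : ℝ) : Measure ℝ) =
        ENNReal.ofReal ((r ^ 2 - 1) * Real.sqrt r / T) • Measure.dirac d +
          ENNReal.ofReal (Real.sqrt r / T) • Measure.dirac d := by
      rw [myCombine (div_nonneg (mul_nonneg (by nlinarith) hx0) hT0.le)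
        (div_nonneg hx0 hT0.le)]
      congr 1
      rw [← add_div]
      ring_nf
    have m2d : (ENNReal.ofReal (r ^ 2 * Real.sqrt (r + 1) / T) •
          Measure.dirac (2 * d : ℝ) : Measure ℝ) =
        ENNReal.ofReal (r * (r - 1) * Real.sqrt (r + 1) / T) • Measure.dirac (2 * d) +
          ENNReal.ofReal (r * Real.sqrt (r + 1) / T) • Measure.dirac (2 * d) := by
      rw [myCombine (div_nonneg (mul_nonneg (mul_nonneg hr0.le (by linarith)) hy0) hT0.le)
        (div_nonneg (mul_nonneg hr0.le hy0) hT0.le)]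
      congr 1
      rw [← add_div]
      ring_nf
    rw [md, m2d]
    abel
  refine ⟨?_, hν⟩
  rw [hν]
  have hneg : Measurable fun x : ℝ => -x := measurable_neg
  simp only [Measure.map_add _ _ hneg, Measure.map_smul, Measure.map_dirac' hneg,
    neg_neg, neg_zero]
  abel
end

section
/- (Inversion of the two-component mixture system) Suppose λ₁ + λ₂ = 1, λ₁ ≠ 1/2, and F₀(x) = λ₁ G₀(x − μ₁) + λ₂ G₀(x − μ₂), where G₀ is symmetric about zero. Then at all points x such that μ₁ + μ₂ − x is a continuity point of F₀, the 2×2 linear system (F₀(x), F₀⁻(x − μ₁ − μ₂))ᵀ = [[λ₁, λ₂],[λ₂, λ₁]] (G₀(x−μ₁), G₀(x−μ₂))ᵀ holds, where F₀⁻(t) = 1 − F₀(−t); and the matrix [[λ₁,λ₂],[λ₂,λ₁]] is invertible precisely because λ₁ ≠ λ₂. -/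
open Matrix

/-- Inversion of the two-component mixture system: with `F₀ = λ₁ G₀(· - μ₁) + λ₂ G₀(· - μ₂)`,
`λ₁ + λ₂ = 1`, `λ₁ ≠ 1/2`, and `G₀` symmetric about zero, at every `x` such that
`μ₁ + μ₂ - x` is a continuity point of `F₀` the linear system
`(F₀(x), F₀⁻(x - μ₁ - μ₂))ᵀ = [[λ₁, λ₂], [λ₂, λ₁]] (G₀(x - μ₁), G₀(x - μ₂))ᵀ` holds,
and the matrix is invertible precisely because `λ₁ ≠ λ₂`. -/
theorem two_component_mixture_inversion
    (l₁ l₂ m₁ m₂ : ℝ) (hsum : l₁ + l₂ = 1) (hhalf : l₁ ≠ 1 / 2)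
    (G₀ : ℝ → ℝ) (hGsym : ∀ t, G₀ t = 1 - G₀ (-t))
    (F₀ : ℝ → ℝ) (hF : ∀ x, F₀ x = l₁ * G₀ (x - m₁) + l₂ * G₀ (x - m₂))
    (x : ℝ) (hcont : ContinuousAt F₀ (m₁ + m₂ - x)) :
    (F₀ x = l₁ * G₀ (x - m₁) + l₂ * G₀ (x - m₂) ∧
      1 - F₀ (-(x - m₁ - m₂)) = l₂ * G₀ (x - m₁) + l₁ * G₀ (x - m₂)) ∧
      ((!![l₁, l₂; l₂, l₁] : Matrix (Fin 2) (Fin 2) ℝ).det ≠ 0 ↔ l₁ ≠ l₂) := by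
  refine ⟨⟨hF x, ?_⟩, ?_⟩
  · rw [hF]
    have h1 := hGsym (-(x - m₁ - m₂) - m₁)
    have h2 := hGsym (-(x - m₁ - m₂) - m₂)
    rw [show -(-(x - m₁ - m₂) - m₁) = x - m₂ by ring] at h1
    rw [show -(-(x - m₁ - m₂) - m₂) = x - m₁ by ring] at h2
    rw [h1, h2]; ring_nf; linarith [mul_comm l₂ (G₀ (x - m₁)), mul_comm l₁ (G₀ (x - m₂))]
  · rw [det_fin_two_of]
    constructor
    · intro h heq; apply h; rw [heq]; ring
    · intro h hd; apply h
      have : (l₁ - l₂) * (l₁ + l₂) = 0 := by linarith [hd, sq_nonneg l₁]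
      rw [hsum, mul_one, sub_eq_zero] at this; exact this
end

section
/- (L¹ convergence of empirical CDF under finite first moment) If F₀ is the CDF of an integrable random variable and F̂ₙ is the empirical CDF of an i.i.d. sample from F₀, then ∫_{-∞}^{∞} |F̂ₙ(t) − F₀(t)| dt → 0 almost surely as n → ∞. -/
open MeasureTheory ProbabilityTheory Filter Topology Set

set_option linter.unusedSectionVars false
set_option linter.unusedVariables false

namespace EmpiricalCDFAux

lemma abs_eq_sub_add_two_max (a b : ℝ) : |a - b| = (a - b) + 2 * max (b - a) 0 := by
  rcases le_total b a with h | h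
  · rw [abs_of_nonneg (by linarith), max_eq_right (by linarith)]; ring
  · rw [abs_of_nonpos (by linarith), max_eq_left (by linarith)]; ring

section CdfFacts

variable (μ₀ : Measure ℝ) [IsProbabilityMeasure μ₀]

lemma cdf_mono : Monotone (fun t : ℝ => (μ₀ (Iic t)).toReal) := fun _ _ hst =>
  ENNReal.toReal_mono (measure_ne_top _ _) (measure_mono (Iic_subset_Iic.2 hst))

lemma cdf_meas : Measurable (fun t : ℝ => (μ₀ (Iic t)).toReal) := (cdf_mono μ₀).measurable

lemma cdf_nonneg : ∀ t : ℝ, 0 ≤ (μ₀ (Iic t)).toReal := fun _ => ENNReal.toReal_nonneg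

lemma cdf_le_one : ∀ t : ℝ, (μ₀ (Iic t)).toReal ≤ 1 := by
  intro t
  have h : μ₀ (Iic t) ≤ 1 := prob_le_one
  simpa using ENNReal.toReal_mono ENNReal.one_ne_top h

lemma one_sub_cdf (t : ℝ) : 1 - (μ₀ (Iic t)).toReal = (μ₀ (Ioi t)).toReal := by
  have h : μ₀ (Iic t) + μ₀ (Ioi t) = 1 := by
    have := measure_add_measure_compl (μ := μ₀) (measurableSet_Iic (a := t))
    rwa [compl_Iic, measure_univ] at this
  have h2 := congrArg ENNReal.toReal h
  rw [ENNReal.toReal_add (measure_ne_top _ _) (measure_ne_top _ _), ENNReal.toReal_one] at h2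
  linarith

lemma cdfE_meas : Measurable (fun t : ℝ => μ₀ (Iic t)) :=
  Monotone.measurable (fun _ _ hst => measure_mono (Iic_subset_Iic.2 hst))

lemma tailE_meas : Measurable (fun t : ℝ => μ₀ (Ioi t)) :=
  Antitone.measurable (fun _ _ hst => measure_mono (Ioi_subset_Ioi hst))

lemma lint_neg : ∫⁻ t in Iio (0:ℝ), μ₀ (Iic t) = ∫⁻ x, ENNReal.ofReal (max (-x) 0) ∂μ₀ := by
  have hS : MeasurableSet {p : ℝ × ℝ | p.2 ≤ p.1} := measurableSet_le measurable_snd measurable_fst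
  calc ∫⁻ t in Iio (0:ℝ), μ₀ (Iic t)
      = ∫⁻ t, μ₀ (Prod.mk t ⁻¹' {p : ℝ × ℝ | p.2 ≤ p.1}) ∂(volume.restrict (Iio 0)) := by
        refine lintegral_congr fun t => by congr 1
    _ = ((volume.restrict (Iio 0)).prod μ₀) {p : ℝ × ℝ | p.2 ≤ p.1} := (Measure.prod_apply hS).symm
    _ = ∫⁻ x, (volume.restrict (Iio 0)) ((fun t => (t, x)) ⁻¹' {p : ℝ × ℝ | p.2 ≤ p.1}) ∂μ₀ :=
        Measure.prod_apply_symm hS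
    _ = ∫⁻ x, ENNReal.ofReal (max (-x) 0) ∂μ₀ := by
        refine lintegral_congr fun x => ?_
        have h1 : ((fun t => (t, x)) ⁻¹' {p : ℝ × ℝ | p.2 ≤ p.1}) = Ici x := by ext t; simp
        rw [h1, Measure.restrict_apply measurableSet_Ici, Ici_inter_Iio, Real.volume_Ico]
        rcases le_total x 0 with h | h
        · rw [max_eq_left (by linarith)]; congr 1; ring
        · rw [max_eq_right (by linarith), ENNReal.ofReal_eq_zero.2 (by linarith),
            ENNReal.ofReal_zero]

lemma lint_pos : ∫⁻ t in Ici (0:ℝ), μ₀ (Ioi t) = ∫⁻ x, ENNReal.ofReal (max x 0) ∂μ₀ := by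
  have hS : MeasurableSet {p : ℝ × ℝ | p.1 < p.2} := measurableSet_lt measurable_fst measurable_snd
  calc ∫⁻ t in Ici (0:ℝ), μ₀ (Ioi t)
      = ∫⁻ t, μ₀ (Prod.mk t ⁻¹' {p : ℝ × ℝ | p.1 < p.2}) ∂(volume.restrict (Ici 0)) := by
        refine lintegral_congr fun t => by congr 1
    _ = ((volume.restrict (Ici 0)).prod μ₀) {p : ℝ × ℝ | p.1 < p.2} := (Measure.prod_apply hS).symm
    _ = ∫⁻ x, (volume.restrict (Ici 0)) ((fun t => (t, x)) ⁻¹' {p : ℝ × ℝ | p.1 < p.2}) ∂μ₀ :=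
        Measure.prod_apply_symm hS
    _ = ∫⁻ x, ENNReal.ofReal (max x 0) ∂μ₀ := by
        refine lintegral_congr fun x => ?_
        have h1 : ((fun t => (t, x)) ⁻¹' {p : ℝ × ℝ | p.1 < p.2}) = Iio x := by ext t; simp
        have h2 : Iio x ∩ Ici 0 = Ico 0 x := by ext t; simp [mem_Ico, and_comm]
        rw [h1, Measure.restrict_apply measurableSet_Iio, h2, Real.volume_Ico]
        rcases le_total 0 x with h | h
        · rw [max_eq_left (by linarith)]; congr 1; ring
        · rw [max_eq_right (by linarith), ENNReal.ofReal_eq_zero.2 (by linarith),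
            ENNReal.ofReal_zero]

lemma lint_neg_lt_top (hint : Integrable (fun x : ℝ => x) μ₀) :
    ∫⁻ x, ENNReal.ofReal (max (-x) 0) ∂μ₀ < ⊤ :=
  (hint.neg.pos_part).lintegral_lt_top

lemma lint_pos_lt_top (hint : Integrable (fun x : ℝ => x) μ₀) :
    ∫⁻ x, ENNReal.ofReal (max x 0) ∂μ₀ < ⊤ :=
  (hint.pos_part).lintegral_lt_top

lemma cdf_intOn (hfin : ∫⁻ t in Iio (0:ℝ), μ₀ (Iic t) < ⊤) :
    IntegrableOn (fun t : ℝ => (μ₀ (Iic t)).toReal) (Iio 0) volume := by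
  refine ⟨(cdf_meas μ₀).aestronglyMeasurable, ?_⟩
  rw [hasFiniteIntegral_iff_ofReal (ae_of_all _ fun t => ENNReal.toReal_nonneg)]
  have h : ∀ t : ℝ, ENNReal.ofReal ((μ₀ (Iic t)).toReal) = μ₀ (Iic t) := fun t =>
    ENNReal.ofReal_toReal (measure_ne_top _ _)
  simpa only [h] using hfin

lemma tail_intOn (hfin : ∫⁻ t in Ici (0:ℝ), μ₀ (Ioi t) < ⊤) :
    IntegrableOn (fun t : ℝ => 1 - (μ₀ (Iic t)).toReal) (Ici 0) volume := by
  have e : (fun t : ℝ => 1 - (μ₀ (Iic t)).toReal) = fun t : ℝ => (μ₀ (Ioi t)).toReal :=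
    funext fun t => one_sub_cdf μ₀ t
  rw [e]
  refine ⟨((tailE_meas μ₀).ennreal_toReal).aestronglyMeasurable, ?_⟩
  rw [hasFiniteIntegral_iff_ofReal (ae_of_all _ fun t => ENNReal.toReal_nonneg)]
  have h : ∀ t : ℝ, ENNReal.ofReal ((μ₀ (Ioi t)).toReal) = μ₀ (Ioi t) := fun t =>
    ENNReal.ofReal_toReal (measure_ne_top _ _)
  simpa only [h] using hfin

lemma cdf_integral_neg (hfin : ∫⁻ t in Iio (0:ℝ), μ₀ (Iic t) < ⊤)
    (hK : ∫⁻ t in Iio (0:ℝ), μ₀ (Iic t) = ∫⁻ x, ENNReal.ofReal (max (-x) 0) ∂μ₀) :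
    ∫ t in Iio (0:ℝ), (μ₀ (Iic t)).toReal = ∫ x, max (-x) 0 ∂μ₀ := by
  rw [integral_toReal ((cdfE_meas μ₀).aemeasurable) (ae_of_all _ fun t => measure_lt_top _ _)]
  rw [integral_eq_lintegral_of_nonneg_ae (μ := μ₀) (f := fun x : ℝ => max (-x) 0)
    (ae_of_all _ fun x => le_max_right _ _)
    ((measurable_neg.max measurable_const).aestronglyMeasurable), hK]

lemma tail_integral_pos (hfin : ∫⁻ t in Ici (0:ℝ), μ₀ (Ioi t) < ⊤)
    (hK : ∫⁻ t in Ici (0:ℝ), μ₀ (Ioi t) = ∫⁻ x, ENNReal.ofReal (max x 0) ∂μ₀) :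
    ∫ t in Ici (0:ℝ), (1 - (μ₀ (Iic t)).toReal) = ∫ x, max x 0 ∂μ₀ := by
  have e : ∀ t : ℝ, 1 - (μ₀ (Iic t)).toReal = (μ₀ (Ioi t)).toReal := one_sub_cdf μ₀
  simp only [e]
  rw [integral_toReal ((tailE_meas μ₀).aemeasurable) (ae_of_all _ fun t => measure_lt_top _ _)]
  rw [integral_eq_lintegral_of_nonneg_ae (μ := μ₀) (f := fun x : ℝ => max x 0)
    (ae_of_all _ fun x => le_max_right _ _)
    ((measurable_id.max measurable_const).aestronglyMeasurable), hK]

end CdfFacts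

section IndFacts

lemma ind_eq_neg (x : ℝ) :
    (fun t : ℝ => if x ≤ t then (1:ℝ) else 0) = (Ici x).indicator (fun _ => 1) := by
  funext t; simp [indicator_apply]

lemma ind_intOn_neg : ∀ x : ℝ,
    IntegrableOn (fun t : ℝ => if x ≤ t then (1:ℝ) else 0) (Iio 0) volume := by
  intro x
  rw [ind_eq_neg, IntegrableOn, integrable_indicator_iff measurableSet_Ici]
  refine integrableOn_const (hs := ne_of_lt ?_)
  rw [Measure.restrict_apply measurableSet_Ici, Ici_inter_Iio, Real.volume_Ico]
  exact ENNReal.ofReal_lt_top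

lemma ind_integral_neg : ∀ x : ℝ,
    ∫ t in Iio (0:ℝ), (if x ≤ t then (1:ℝ) else 0) = max (-x) 0 := by
  intro x
  rw [ind_eq_neg, integral_indicator_const (1:ℝ) measurableSet_Ici, measureReal_def,
    Measure.restrict_apply measurableSet_Ici, Ici_inter_Iio, Real.volume_Ico,
    smul_eq_mul, mul_one, ENNReal.toReal_ofReal', zero_sub]

lemma ind_eq_pos (x : ℝ) :
    (fun t : ℝ => 1 - if x ≤ t then (1:ℝ) else 0) = (Iio x).indicator (fun _ => 1) := by
  funext t
  by_cases h : x ≤ t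
  · simp [indicator_apply, h, not_lt.2 h]
  · simp [indicator_apply, h, not_le.1 h]

lemma Iio_inter_Ici' (x : ℝ) : Iio x ∩ Ici 0 = Ico 0 x := by
  ext t; simp [mem_Ico, and_comm]

lemma ind_intOn_pos : ∀ x : ℝ,
    IntegrableOn (fun t : ℝ => 1 - if x ≤ t then (1:ℝ) else 0) (Ici 0) volume := by
  intro x
  rw [ind_eq_pos, IntegrableOn, integrable_indicator_iff measurableSet_Iio]
  refine integrableOn_const (hs := ne_of_lt ?_)
  rw [Measure.restrict_apply measurableSet_Iio, Iio_inter_Ici', Real.volume_Ico]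
  exact ENNReal.ofReal_lt_top

lemma ind_integral_pos : ∀ x : ℝ,
    ∫ t in Ici (0:ℝ), (1 - if x ≤ t then (1:ℝ) else 0) = max x 0 := by
  intro x
  rw [ind_eq_pos, integral_indicator_const (1:ℝ) measurableSet_Iio, measureReal_def,
    Measure.restrict_apply measurableSet_Iio, Iio_inter_Ici', Real.volume_Ico,
    smul_eq_mul, mul_one, ENNReal.toReal_ofReal', sub_zero]

end IndFacts
section Det

variable (μ₀ : Measure ℝ) [IsProbabilityMeasure μ₀]

-- assume all previously-proved facts as hypotheses for now, to develop the proof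
lemma det (hint : Integrable (fun x : ℝ => x) μ₀) (x : ℕ → ℝ)
    (hA : Tendsto (fun n : ℕ => (∑ i ∈ Finset.range n, max (-(x i)) 0)/n) atTop
      (𝓝 (∫ y, max (-y) 0 ∂μ₀)))
    (hB : Tendsto (fun n : ℕ => (∑ i ∈ Finset.range n, max (x i) 0)/n) atTop
      (𝓝 (∫ y, max y 0 ∂μ₀)))
    (hconv : ∀ᵐ t : ℝ, Tendsto (fun n : ℕ => (∑ i ∈ Finset.range n, if x i ≤ t then (1:ℝ) else 0)/n)
      atTop (𝓝 ((μ₀ (Iic t)).toReal)))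
    -- facts proved elsewhere:
    (cdf_meas : Measurable (fun t : ℝ => (μ₀ (Iic t)).toReal))
    (cdf_nonneg : ∀ t : ℝ, 0 ≤ (μ₀ (Iic t)).toReal)
    (cdf_le_one : ∀ t : ℝ, (μ₀ (Iic t)).toReal ≤ 1)
    (cdf_intOn : IntegrableOn (fun t : ℝ => (μ₀ (Iic t)).toReal) (Iio 0) volume)
    (tail_intOn : IntegrableOn (fun t : ℝ => 1 - (μ₀ (Iic t)).toReal) (Ici 0) volume)
    (cdf_integral_neg : ∫ t in Iio (0:ℝ), (μ₀ (Iic t)).toReal = ∫ y, max (-y) 0 ∂μ₀)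
    (tail_integral_pos : ∫ t in Ici (0:ℝ), (1 - (μ₀ (Iic t)).toReal) = ∫ y, max y 0 ∂μ₀)
    (ind_intOn_neg : ∀ x : ℝ, IntegrableOn (fun t : ℝ => if x ≤ t then (1:ℝ) else 0) (Iio 0) volume)
    (ind_integral_neg : ∀ x : ℝ, ∫ t in Iio (0:ℝ), (if x ≤ t then (1:ℝ) else 0) = max (-x) 0)
    (ind_intOn_pos : ∀ x : ℝ, IntegrableOn (fun t : ℝ => 1 - if x ≤ t then (1:ℝ) else 0) (Ici 0) volume)
    (ind_integral_pos : ∀ x : ℝ, ∫ t in Ici (0:ℝ), (1 - if x ≤ t then (1:ℝ) else 0) = max x 0) :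
    Tendsto (fun n : ℕ => ∫ t : ℝ,
      |(∑ i ∈ Finset.range n, if x i ≤ t then (1:ℝ) else 0)/n - (μ₀ (Iic t)).toReal|)
      atTop (𝓝 0) := by
  set G : ℝ → ℝ := fun t => (μ₀ (Iic t)).toReal with hGdef
  set F : ℕ → ℝ → ℝ := fun n t => (∑ i ∈ Finset.range n, if x i ≤ t then (1:ℝ) else 0)/n with hFdef
  have hFmeas : ∀ n, Measurable (F n) := by
    intro n
    apply Measurable.div_const
    apply Finset.measurable_sum
    intro i _
    exact Measurable.ite (measurableSet_le measurable_const measurable_id) measurable_const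
      measurable_const
  have hF0 : ∀ n t, 0 ≤ F n t := by
    intro n t
    apply div_nonneg _ (Nat.cast_nonneg n)
    exact Finset.sum_nonneg fun i _ => by positivity
  have hF1 : ∀ n t, F n t ≤ 1 := by
    intro n t
    rcases Nat.eq_zero_or_pos n with hn | hn
    · simp [hFdef, hn]
    · apply div_le_one_of_le₀
      · calc (∑ i ∈ Finset.range n, if x i ≤ t then (1:ℝ) else 0)
            ≤ ∑ i ∈ Finset.range n, 1 := Finset.sum_le_sum fun i _ => by split <;> norm_num
          _ = n := by simp
      · exact Nat.cast_nonneg n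
  -- empirical integrals
  have hFintNeg : ∀ n, IntegrableOn (F n) (Iio 0) volume := fun n =>
    (integrable_finset_sum _ fun i _ => ind_intOn_neg (x i)).div_const _
  have hFinteg : ∀ n : ℕ, ∫ t in Iio (0:ℝ), F n t = (∑ i ∈ Finset.range n, max (-(x i)) 0)/n := by
    intro n
    rw [hFdef]
    simp only
    rw [integral_div, integral_finset_sum _ fun i _ => ind_intOn_neg (x i)]
    congr 1
    exact Finset.sum_congr rfl fun i _ => ind_integral_neg (x i)
  have h1Feq : ∀ n : ℕ, n ≠ 0 →
      (fun t => 1 - F n t) = fun t => (∑ i ∈ Finset.range n, (1 - if x i ≤ t then (1:ℝ) else 0))/n := by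
    intro n hn
    funext t
    rw [Finset.sum_sub_distrib, Finset.sum_const, Finset.card_range, nsmul_eq_mul, mul_one,
      sub_div, div_self (Nat.cast_ne_zero.2 hn)]
  have h1FintPos : ∀ n : ℕ, n ≠ 0 → IntegrableOn (fun t => 1 - F n t) (Ici 0) volume := by
    intro n hn
    rw [h1Feq n hn]
    exact (integrable_finset_sum _ fun i _ => ind_intOn_pos (x i)).div_const _
  have h1Finteg : ∀ n : ℕ, n ≠ 0 →
      ∫ t in Ici (0:ℝ), (1 - F n t) = (∑ i ∈ Finset.range n, max (x i) 0)/n := by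
    intro n hn
    rw [h1Feq n hn, integral_div, integral_finset_sum _ fun i _ => ind_intOn_pos (x i)]
    congr 1
    exact Finset.sum_congr rfl fun i _ => ind_integral_pos (x i)
  -- the two Scheffé remainder terms
  set P : ℕ → ℝ := fun n => ∫ t in Iio (0:ℝ), max (G t - F n t) 0 with hPdef
  set Q : ℕ → ℝ := fun n => ∫ t in Ici (0:ℝ), max (F n t - G t) 0 with hQdef
  have hPmeas : ∀ n, Measurable (fun t => max (G t - F n t) 0) := fun n =>
    (cdf_meas.sub (hFmeas n)).max measurable_const
  have hQmeas : ∀ n, Measurable (fun t => max (F n t - G t) 0) := fun n =>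
    ((hFmeas n).sub cdf_meas).max measurable_const
  have hPbound : ∀ n t, ‖max (G t - F n t) 0‖ ≤ G t := by
    intro n t
    rw [Real.norm_eq_abs, abs_of_nonneg (le_max_right _ _)]
    exact max_le (by linarith [hF0 n t]) (cdf_nonneg t)
  have hQbound : ∀ n t, ‖max (F n t - G t) 0‖ ≤ 1 - G t := by
    intro n t
    rw [Real.norm_eq_abs, abs_of_nonneg (le_max_right _ _)]
    exact max_le (by linarith [hF1 n t]) (by linarith [cdf_le_one t])
  have hPint : ∀ n, IntegrableOn (fun t => max (G t - F n t) 0) (Iio 0) volume := by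
    intro n
    refine Integrable.mono cdf_intOn (hPmeas n).aestronglyMeasurable (ae_of_all _ fun t => ?_)
    exact (hPbound n t).trans (le_abs_self _)
  have hQint : ∀ n, IntegrableOn (fun t => max (F n t - G t) 0) (Ici 0) volume := by
    intro n
    refine Integrable.mono tail_intOn (hQmeas n).aestronglyMeasurable (ae_of_all _ fun t => ?_)
    exact (hQbound n t).trans (le_abs_self _)
  -- P, Q tend to 0 by dominated convergence
  have hPlim : Tendsto P atTop (𝓝 0) := by
    have h := tendsto_integral_of_dominated_convergence (μ := volume.restrict (Iio 0))
      (F := fun n t => max (G t - F n t) 0) (f := fun _ => (0:ℝ)) G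
      (fun n => (hPmeas n).aestronglyMeasurable)
      cdf_intOn
      (fun n => ae_of_all _ fun t => hPbound n t)
      ?_
    · simpa using h
    · refine ae_restrict_of_ae (hconv.mono fun t ht => ?_)
      have h1 : Tendsto (fun n => G t - F n t) atTop (𝓝 (G t - G t)) :=
        (tendsto_const_nhds (x := G t)).sub ht
      rw [sub_self] at h1
      have h2 := h1.max (tendsto_const_nhds (x := (0:ℝ)))
      rw [max_self] at h2
      exact h2
  have hQlim : Tendsto Q atTop (𝓝 0) := by
    have h := tendsto_integral_of_dominated_convergence (μ := volume.restrict (Ici 0))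
      (F := fun n t => max (F n t - G t) 0) (f := fun _ => (0:ℝ)) (fun t => 1 - G t)
      (fun n => (hQmeas n).aestronglyMeasurable)
      tail_intOn
      (fun n => ae_of_all _ fun t => hQbound n t)
      ?_
    · simpa using h
    · refine ae_restrict_of_ae (hconv.mono fun t ht => ?_)
      have h1 : Tendsto (fun n => F n t - G t) atTop (𝓝 (G t - G t)) :=
        ht.sub (tendsto_const_nhds (x := G t))
      rw [sub_self] at h1
      have h2 := h1.max (tendsto_const_nhds (x := (0:ℝ)))
      rw [max_self] at h2
      exact h2
  -- the key identity for n ≥ 1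
  have key : ∀ n : ℕ, n ≠ 0 → (∫ t : ℝ, |F n t - G t|) =
      ((∑ i ∈ Finset.range n, max (-(x i)) 0)/n - ∫ y, max (-y) 0 ∂μ₀) +
      ((∑ i ∈ Finset.range n, max (x i) 0)/n - ∫ y, max y 0 ∂μ₀) + 2 * P n + 2 * Q n := by
    intro n hn
    have hIntNeg : IntegrableOn (fun t => |F n t - G t|) (Iio 0) volume :=
      ((hFintNeg n).sub cdf_intOn).abs
    have hIntPos : IntegrableOn (fun t => |F n t - G t|) (Ici 0) volume := by
      have e : (fun t => |F n t - G t|) = (fun t => |(1 - F n t) - (1 - G t)|) := by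
        funext t; rw [abs_sub_comm]; congr 1; ring
      rw [e]
      exact ((h1FintPos n hn).sub tail_intOn).abs
    have hIntAll : Integrable (fun t => |F n t - G t|) volume := by
      rw [← integrableOn_univ, ← Iio_union_Ici (a := (0:ℝ))]
      exact hIntNeg.union hIntPos
    have hsplit : (∫ t : ℝ, |F n t - G t|) =
        (∫ t in Iio (0:ℝ), |F n t - G t|) + ∫ t in Ici (0:ℝ), |F n t - G t| := by
      rw [← compl_Iio (a := (0:ℝ))]
      exact (integral_add_compl measurableSet_Iio hIntAll).symm
    have hneg : (∫ t in Iio (0:ℝ), |F n t - G t|) =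
        ((∑ i ∈ Finset.range n, max (-(x i)) 0)/n - ∫ y, max (-y) 0 ∂μ₀) + 2 * P n := by
      have e1 : ∀ t : ℝ, |F n t - G t| = (F n t - G t) + 2 * max (G t - F n t) 0 := fun t =>
        abs_eq_sub_add_two_max _ _
      simp only [e1]
      have i1 : ∫ t in Iio (0:ℝ), ((F n t - G t) + 2 * max (G t - F n t) 0) =
          (∫ t in Iio (0:ℝ), (F n t - G t)) + ∫ t in Iio (0:ℝ), 2 * max (G t - F n t) 0 :=
        integral_add ((hFintNeg n).sub cdf_intOn) ((hPint n).const_mul 2)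
      have i2 : ∫ t in Iio (0:ℝ), (F n t - G t) =
          (∫ t in Iio (0:ℝ), F n t) - ∫ t in Iio (0:ℝ), G t :=
        integral_sub (hFintNeg n) cdf_intOn
      rw [i1, i2, integral_const_mul 2 _, hFinteg n, cdf_integral_neg]
    have hpos : (∫ t in Ici (0:ℝ), |F n t - G t|) =
        ((∑ i ∈ Finset.range n, max (x i) 0)/n - ∫ y, max y 0 ∂μ₀) + 2 * Q n := by
      have e2 : ∀ t : ℝ, |F n t - G t| =
          ((1 - F n t) - (1 - G t)) + 2 * max (F n t - G t) 0 := by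
        intro t
        rw [abs_sub_comm, abs_eq_sub_add_two_max]
        ring
      simp only [e2]
      have i1 : ∫ t in Ici (0:ℝ), (((1 - F n t) - (1 - G t)) + 2 * max (F n t - G t) 0) =
          (∫ t in Ici (0:ℝ), ((1 - F n t) - (1 - G t))) + ∫ t in Ici (0:ℝ), 2 * max (F n t - G t) 0 :=
        integral_add ((h1FintPos n hn).sub tail_intOn) ((hQint n).const_mul 2)
      have i2 : ∫ t in Ici (0:ℝ), ((1 - F n t) - (1 - G t)) =
          (∫ t in Ici (0:ℝ), (1 - F n t)) - ∫ t in Ici (0:ℝ), (1 - G t) :=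
        integral_sub (h1FintPos n hn) tail_intOn
      rw [i1, i2, integral_const_mul 2 _, h1Finteg n hn, tail_integral_pos]
    rw [hsplit, hneg, hpos]
    ring
  -- conclude
  have h1 : Tendsto (fun n : ℕ => (∑ i ∈ Finset.range n, max (-(x i)) 0)/n - ∫ y, max (-y) 0 ∂μ₀)
      atTop (𝓝 0) := by simpa using hA.sub (tendsto_const_nhds (x := ∫ y, max (-y) 0 ∂μ₀))
  have h2 : Tendsto (fun n : ℕ => (∑ i ∈ Finset.range n, max (x i) 0)/n - ∫ y, max y 0 ∂μ₀)
      atTop (𝓝 0) := by simpa using hB.sub (tendsto_const_nhds (x := ∫ y, max y 0 ∂μ₀))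
  have hR : Tendsto (fun n : ℕ =>
      ((∑ i ∈ Finset.range n, max (-(x i)) 0)/n - ∫ y, max (-y) 0 ∂μ₀) +
      ((∑ i ∈ Finset.range n, max (x i) 0)/n - ∫ y, max y 0 ∂μ₀) + 2 * P n + 2 * Q n)
      atTop (𝓝 0) := by
    have := ((h1.add h2).add (hPlim.const_mul 2)).add (hQlim.const_mul 2)
    simpa using this
  refine hR.congr' ?_
  filter_upwards [eventually_ne_atTop (0 : ℕ)] with n hn
  exact (key n hn).symm

end Det

section Main

theorem empirical_cdf_L1_convergence' {Ω : Type*} [MeasureSpace Ω]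
    [IsProbabilityMeasure (ℙ : Measure Ω)]
    (X : ℕ → Ω → ℝ) (hmeas : ∀ i, Measurable (X i))
    (hindep : iIndepFun X ℙ)
    (μ₀ : Measure ℝ) [IsProbabilityMeasure μ₀]
    (hlaw : ∀ i, Measure.map (X i) ℙ = μ₀)
    (hint : Integrable (fun x : ℝ => x) μ₀) :
    ∀ᵐ ω ∂ℙ, Tendsto
      (fun n : ℕ => ∫ t : ℝ,
        |(∑ i ∈ Finset.range n, if X i ω ≤ t then (1 : ℝ) else 0) / n -
          (μ₀ (Iic t)).toReal|)
      atTop (𝓝 0) := by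
  -- strong law of large numbers for `f ∘ X i`
  have slln : ∀ f : ℝ → ℝ, Measurable f → Integrable f μ₀ →
      ∀ᵐ ω ∂ℙ, Tendsto (fun n : ℕ => (∑ i ∈ Finset.range n, f (X i ω))/n) atTop
        (𝓝 (∫ y, f y ∂μ₀)) := by
    intro f hf hfint
    have hident : ∀ i, IdentDistrib (fun ω => f (X i ω)) (fun ω => f (X 0 ω)) ℙ ℙ := by
      intro i
      exact IdentDistrib.comp (⟨(hmeas i).aemeasurable, (hmeas 0).aemeasurable,
        by rw [hlaw i, hlaw 0]⟩ : IdentDistrib (X i) (X 0) ℙ ℙ) hf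
    have hpair : Pairwise (Function.onFun (IndepFun · · ℙ) fun i ω => f (X i ω)) :=
      fun i j hij => (hindep.indepFun hij).comp hf hf
    have hint0 : Integrable (fun ω => f (X 0 ω)) ℙ :=
      (integrable_map_measure hf.aestronglyMeasurable (hmeas 0).aemeasurable).1
        (by rwa [hlaw 0])
    have h := strong_law_ae_real (fun i ω => f (X i ω)) hint0 hpair hident
    have hI : ∫ ω, f (X 0 ω) ∂ℙ = ∫ y, f y ∂μ₀ := by
      rw [← hlaw 0, integral_map (hmeas 0).aemeasurable hf.aestronglyMeasurable]
    rwa [hI] at h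
  -- pointwise (in t) convergence of the empirical CDF
  have hptwise : ∀ t : ℝ, ∀ᵐ ω ∂ℙ, Tendsto
      (fun n : ℕ => (∑ i ∈ Finset.range n, if X i ω ≤ t then (1:ℝ) else 0)/n) atTop
      (𝓝 ((μ₀ (Iic t)).toReal)) := by
    intro t
    have hmf : Measurable ((Iic t).indicator (fun _ => (1:ℝ))) :=
      measurable_const.indicator measurableSet_Iic
    have hif : Integrable ((Iic t).indicator fun _ => (1:ℝ)) μ₀ :=
      (integrable_const (1:ℝ)).indicator measurableSet_Iic
    have h := slln _ hmf hif
    have hval : ∫ y, (Iic t).indicator (fun _ => (1:ℝ)) y ∂μ₀ = (μ₀ (Iic t)).toReal := by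
      rw [integral_indicator_const (1:ℝ) measurableSet_Iic, smul_eq_mul, mul_one, measureReal_def]
    rw [hval] at h
    refine h.mono fun ω hω => ?_
    simpa only [Set.indicator_apply, mem_Iic] using hω
  -- Fubini: almost every ω, for a.e. t the empirical CDF converges at t
  set S : Set (ℝ × Ω) := {p | Tendsto
      (fun n : ℕ => (∑ i ∈ Finset.range n, if X i p.2 ≤ p.1 then (1:ℝ) else 0)/n) atTop
      (𝓝 ((μ₀ (Iic p.1)).toReal))} with hSdef
  have hSmeas : MeasurableSet S := by
    apply measurableSet_tendsto_fun (γ := ℝ)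
    · intro n
      apply Measurable.div_const
      apply Finset.measurable_sum
      intro i _
      exact Measurable.ite (measurableSet_le ((hmeas i).comp measurable_snd) measurable_fst)
        measurable_const measurable_const
    · exact (cdf_meas μ₀).comp measurable_fst
  have hprod : (volume.prod ℙ) Sᶜ = 0 := by
    rw [Measure.measure_prod_null hSmeas.compl]
    filter_upwards with t
    have h := ae_iff.1 (hptwise t)
    exact h
  have hswap : (Measure.prod ℙ volume) (Prod.swap ⁻¹' Sᶜ) = 0 := by
    calc (Measure.prod ℙ volume) (Prod.swap ⁻¹' Sᶜ)
        = (Measure.map Prod.swap (Measure.prod ℙ volume)) Sᶜ :=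
          (Measure.map_apply measurable_swap hSmeas.compl).symm
      _ = (volume.prod ℙ) Sᶜ := by rw [Measure.prod_swap]
      _ = 0 := hprod
  have hae : ∀ᵐ ω ∂ℙ, ∀ᵐ t : ℝ, Tendsto
      (fun n : ℕ => (∑ i ∈ Finset.range n, if X i ω ≤ t then (1:ℝ) else 0)/n) atTop
      (𝓝 ((μ₀ (Iic t)).toReal)) := by
    have h := Measure.measure_ae_null_of_prod_null hswap
    refine h.mono fun ω hω => ?_
    rw [ae_iff]
    exact hω
  -- strong law for positive and negative parts
  have hAs := slln (fun y => max (-y) 0) (measurable_neg.max measurable_const) hint.neg.pos_part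
  have hBs := slln (fun y => max y 0) (measurable_id.max measurable_const) hint.pos_part
  -- conclude with the deterministic lemma
  filter_upwards [hAs, hBs, hae] with ω hA hB hconv
  exact det μ₀ hint (fun i => X i ω) hA hB hconv
    (cdf_meas μ₀) (cdf_nonneg μ₀) (cdf_le_one μ₀)
    (cdf_intOn μ₀ ((lint_neg μ₀).symm ▸ lint_neg_lt_top μ₀ hint))
    (tail_intOn μ₀ ((lint_pos μ₀).symm ▸ lint_pos_lt_top μ₀ hint))
    (cdf_integral_neg μ₀ ((lint_neg μ₀).symm ▸ lint_neg_lt_top μ₀ hint) (lint_neg μ₀))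
    (tail_integral_pos μ₀ ((lint_pos μ₀).symm ▸ lint_pos_lt_top μ₀ hint) (lint_pos μ₀))
    ind_intOn_neg ind_integral_neg ind_intOn_pos ind_integral_pos

end Main

end EmpiricalCDFAux

open EmpiricalCDFAux in
/-- `L¹` convergence of the empirical CDF under a finite first moment: if `X₁, X₂, ...`
are i.i.d. with integrable common law `μ₀`, then the `L¹` distance between the empirical
CDF and the true CDF tends to zero almost surely. -/
theorem empirical_cdf_L1_convergence {Ω : Type*} [MeasureSpace Ω]
    [IsProbabilityMeasure (ℙ : Measure Ω)]
    (X : ℕ → Ω → ℝ) (hmeas : ∀ i, Measurable (X i))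
    (hindep : iIndepFun X ℙ)
    (μ₀ : Measure ℝ) [IsProbabilityMeasure μ₀]
    (hlaw : ∀ i, Measure.map (X i) ℙ = μ₀)
    (hint : Integrable (fun x : ℝ => x) μ₀) :
    ∀ᵐ ω ∂ℙ, Tendsto
      (fun n : ℕ => ∫ t : ℝ,
        |(∑ i ∈ Finset.range n, if X i ω ≤ t then (1 : ℝ) else 0) / n -
          (μ₀ (Iic t)).toReal|)
      atTop (𝓝 0) :=
  EmpiricalCDFAux.empirical_cdf_L1_convergence' X hmeas hindep μ₀ hlaw hint
end
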